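/- arXiv:math/0010163 — 6 statements merged into one kernel-verified Lean document; each statement's English description precedes it below -/
import Mathlib

section
/- Let f ∈ ℂ[x₀,x₁,x₂,x₃] be a nonzero homogeneous polynomial of degree d ≥ 3, let L ⊂ ℙ³(ℂ) be a projective line, and let P₁,…,P_k ∈ L be k ≥ 2 distinct points, each of multiplicity ≥ 3 on the surface X = {f = 0}. If 2k > d − 1, then every point of L is a singular point of X (in particular f vanishes identically on L and X has non-isolated singularities). Consequently, a degree-d surface whose only singularities are ordinary triple points contains at most ⌊(d−1)/2⌋ triple points on any line; for d = 6, at most two triple points lie on a line. -/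
open MvPolynomial

noncomputable section

/-- Iterated partial derivative of `f` along a list of variable indices. -/
def pderivList {n : ℕ} (l : List (Fin n)) (f : MvPolynomial (Fin n) ℂ) :
    MvPolynomial (Fin n) ℂ :=
  l.foldl (fun g i => MvPolynomial.pderiv i g) f

/-- All partial derivatives of `f` of order `< m` vanish at `p`
(`P` has multiplicity `≥ m` on `{f = 0}`). -/
def MultAtLeast {n : ℕ} (f : MvPolynomial (Fin n) ℂ) (p : Fin n → ℂ) (m : ℕ) : Prop :=
  ∀ l : List (Fin n), l.length < m → MvPolynomial.eval p (pderivList l f) = 0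

/-- `p` is (a representative of) a singular point of `{f = 0}`. -/
def SingularAt (f : MvPolynomial (Fin 4) ℂ) (p : Fin 4 → ℂ) : Prop :=
  MultAtLeast f p 2

/-- The partial derivatives of `c` have no common zero in `ℂⁿ ∖ {0}`. -/
def NowhereSingular {n : ℕ} (c : MvPolynomial (Fin n) ℂ) : Prop :=
  ∀ p : Fin n → ℂ, p ≠ 0 → ∃ i, MvPolynomial.eval p (MvPolynomial.pderiv i c) ≠ 0

/-- Linear change of coordinates: `substMatrix B f` is the polynomial `x ↦ f (B.mulVec x)`. -/
def substMatrix {n : ℕ} (B : Matrix (Fin n) (Fin n) ℂ) (f : MvPolynomial (Fin n) ℂ) :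
    MvPolynomial (Fin n) ℂ :=
  MvPolynomial.aeval (fun i => ∑ j, MvPolynomial.C (B i j) * MvPolynomial.X j) f

/-- `p` is (a representative of) an ordinary triple point of the degree-`d` surface `{f = 0}`:
all partials of order `≤ 2` vanish at `p`, some third-order partial does not, and after a
linear change of coordinates taking `(0,0,0,1)` to `p`, writing `f` as
`∑ⱼ x₃^(d-j) fⱼ(x₀,x₁,x₂)` with `fⱼ` homogeneous of degree `j`, the cubic `f₃` is nonsingular. -/
def OrdinaryTriplePointAt (d : ℕ) (f : MvPolynomial (Fin 4) ℂ) (p : Fin 4 → ℂ) : Prop :=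
  MultAtLeast f p 3 ∧
  (∃ l : List (Fin 4), l.length = 3 ∧ MvPolynomial.eval p (pderivList l f) ≠ 0) ∧
  ∃ B : Matrix (Fin 4) (Fin 4) ℂ, IsUnit B.det ∧ B.mulVec ![0, 0, 0, 1] = p ∧
    ∃ g : ℕ → MvPolynomial (Fin 3) ℂ,
      (∀ j, (g j).IsHomogeneous j) ∧
      substMatrix B f =
        ∑ j ∈ Finset.range (d + 1),
          (MvPolynomial.X 3) ^ (d - j) * MvPolynomial.rename Fin.castSucc (g j) ∧
      NowhereSingular (g 3)

/-- The set of singular points of `{f = 0}` in `ℙ³(ℂ)`. -/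
def SingSet (f : MvPolynomial (Fin 4) ℂ) : Set (Projectivization ℂ (Fin 4 → ℂ)) :=
  {P | SingularAt f P.rep}

/-- `{f = 0}` has `ν` ordinary triple points as its only singularities. -/
def OnlyTriplePoints (d ν : ℕ) (f : MvPolynomial (Fin 4) ℂ) : Prop :=
  (SingSet f).Finite ∧ (SingSet f).ncard = ν ∧
  ∀ P ∈ SingSet f, OrdinaryTriplePointAt d f P.rep

namespace LineAux

lemma degree_sub_single {i : Fin 4} {d : Fin 4 →₀ ℕ} (h : d i ≠ 0) :
    (d - Finsupp.single i 1).degree + 1 = d.degree := by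
  have hle : Finsupp.single i 1 ≤ d := by
    rw [Finsupp.single_le_iff]; omega
  have hsum : (d - Finsupp.single i 1) + Finsupp.single i 1 = d := tsub_add_cancel_of_le hle
  have hdeg : ((d - Finsupp.single i 1) + Finsupp.single i 1).degree
      = (d - Finsupp.single i 1).degree + (Finsupp.single i 1).degree := by
    simp [Finsupp.degree_eq_weight_one, map_add]
  have hsingle : (Finsupp.single i 1).degree = 1 := by
    simp [Finsupp.degree_eq_weight_one, Finsupp.weight_apply, Finsupp.sum_single_index]
  conv_rhs => rw [← hsum]
  rw [hdeg, hsingle]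

lemma isHomog_pderiv {n : ℕ} {φ : MvPolynomial (Fin 4) ℂ} (hφ : φ.IsHomogeneous n) (i : Fin 4) :
    (pderiv i φ).IsHomogeneous (n - 1) := by
  have hrw : pderiv i φ = ∑ d ∈ φ.support, pderiv i (monomial d (coeff d φ)) := by
    rw [← map_sum, support_sum_monomial_coeff]
  rw [hrw]
  apply IsHomogeneous.sum
  intro d hd
  rw [pderiv_monomial]
  by_cases h0 : d i = 0
  · rw [h0]
    norm_num
    exact isHomogeneous_zero _ _ _
  · apply isHomogeneous_monomial
    have hdn : d.degree = n := by
      by_contra hne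
      exact mem_support_iff.mp hd (hφ.coeff_eq_zero hne)
    have := degree_sub_single (i := i) (d := d) h0
    omega

lemma eval_smul_homog {n : ℕ} {φ : MvPolynomial (Fin 4) ℂ} (hφ : φ.IsHomogeneous n)
    (c : ℂ) (p : Fin 4 → ℂ) : eval (c • p) φ = c ^ n * eval p φ := by
  have h1 : φ = ∑ d ∈ φ.support, monomial d (coeff d φ) := (support_sum_monomial_coeff φ).symm
  rw [h1, map_sum, map_sum, Finset.mul_sum]
  apply Finset.sum_congr rfl
  intro d hd
  have hdn : d.degree = n := by
    by_contra hne
    exact mem_support_iff.mp hd (hφ.coeff_eq_zero hne)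
  rw [eval_monomial, eval_monomial, ← hdn]
  have hdd : d.degree = ∑ j ∈ d.support, d j := by
    simp [Finsupp.degree_eq_weight_one, Finsupp.weight_apply, Finsupp.sum]
  rw [hdd, Finsupp.prod, Finsupp.prod]
  simp only [Pi.smul_apply, smul_eq_mul, mul_pow]
  rw [Finset.prod_mul_distrib, Finset.prod_pow_eq_pow_sum]
  ring

/-- Restriction of a polynomial to the affine line `r ↦ r • a + b`. -/
def lineSubst (a b : Fin 4 → ℂ) : MvPolynomial (Fin 4) ℂ →ₐ[ℂ] Polynomial ℂ :=
  aeval fun m => Polynomial.C (a m) * Polynomial.X + Polynomial.C (b m)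

lemma lineSubst_eval (a b : Fin 4 → ℂ) (h : MvPolynomial (Fin 4) ℂ) (r : ℂ) :
    (lineSubst a b h).eval r = eval (r • a + b) h := by
  induction h using MvPolynomial.induction_on with
  | C c => simp [lineSubst]
  | add p q hp hq => simp [map_add, hp, hq]
  | mul_X p i hp =>
      simp only [lineSubst] at hp ⊢
      simp only [map_mul, Polynomial.eval_mul, aeval_X, Polynomial.eval_add,
        Polynomial.eval_mul, Polynomial.eval_C, Polynomial.eval_X, eval_mul, eval_X,
        Pi.add_apply, Pi.smul_apply, smul_eq_mul, hp]
      ring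

lemma lineSubst_derivative (a b : Fin 4 → ℂ) (h : MvPolynomial (Fin 4) ℂ) :
    (lineSubst a b h).derivative
      = ∑ m, Polynomial.C (a m) * lineSubst a b (pderiv m h) := by
  induction h using MvPolynomial.induction_on with
  | C c => simp [lineSubst]
  | add p q hp hq => simp [map_add, hp, hq, mul_add, Finset.sum_add_distrib]
  | mul_X p i hp =>
      have hXi : lineSubst a b (X i) = Polynomial.C (a i) * Polynomial.X + Polynomial.C (b i) :=
        aeval_X _ i
      have hdXi : ∀ m : Fin 4, pderiv m (X i : MvPolynomial (Fin 4) ℂ)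
          = if m = i then 1 else 0 := by
        intro m
        by_cases hmi : m = i
        · subst hmi; simp
        · simp [hmi, pderiv_X_of_ne (Ne.symm hmi)]
      have expand : ∀ m : Fin 4, Polynomial.C (a m) * lineSubst a b (pderiv m (p * X i))
          = Polynomial.C (a m) * lineSubst a b (pderiv m p) * lineSubst a b (X i)
            + (if m = i then lineSubst a b p * Polynomial.C (a i) else 0) := by
        intro m
        rw [pderiv_mul, map_add, map_mul, map_mul, hdXi m]
        by_cases hmi : m = i
        · subst hmi
          simp only [if_true, map_one, mul_one]
          ring
        · simp only [hmi, if_false, map_zero, mul_zero, add_zero]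
          ring
      rw [map_mul, Polynomial.derivative_mul, hp, hXi]
      rw [Finset.sum_congr rfl (fun m _ => expand m), Finset.sum_add_distrib]
      rw [Finset.sum_ite_eq' Finset.univ i
        (fun _ => lineSubst a b p * Polynomial.C (a i))]
      simp only [Finset.mem_univ, if_true, ← Finset.sum_mul, hXi]
      simp

lemma lineSubst_natDegree_le (a b : Fin 4 → ℂ) {h : MvPolynomial (Fin 4) ℂ} {n : ℕ}
    (hh : h.totalDegree ≤ n) : (lineSubst a b h).natDegree ≤ n := by
  have hdeg : ∀ i : Fin 4,
      (Polynomial.C (a i) * Polynomial.X + Polynomial.C (b i)).natDegree ≤ 1 := by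
    intro i
    refine (Polynomial.natDegree_add_le _ _).trans ?_
    simp only [Polynomial.natDegree_C, max_le_iff]
    exact ⟨(Polynomial.natDegree_C_mul_le _ _).trans (by simp), by omega⟩
  have := MvPolynomial.aeval_natDegree_le h hh _ hdeg
  simpa [lineSubst, mul_one] using this

lemma sum_count_le (mts : Multiset ℂ) (s : Finset ℂ) :
    ∑ x ∈ s, mts.count x ≤ Multiset.card mts := by
  classical
  calc ∑ x ∈ s, mts.count x
      = ∑ x ∈ s.filter (· ∈ mts.toFinset), mts.count x := by
        refine (Finset.sum_filter_of_ne ?_).symm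
        intro x _ hcount
        rw [Multiset.mem_toFinset]
        by_contra hmem
        exact hcount (Multiset.count_eq_zero_of_notMem hmem)
    _ ≤ ∑ x ∈ mts.toFinset, mts.count x :=
        Finset.sum_le_sum_of_subset (fun x hx => (Finset.mem_filter.mp hx).2)
    _ = Multiset.card mts := Multiset.toFinset_sum_count_eq mts

lemma mult_count {q : Polynomial ℂ} (hq : q ≠ 0) {k n : ℕ} (r : Fin k → ℂ)
    (hr : Function.Injective r) (hmul : ∀ i, n < q.rootMultiplicity (r i)) :
    k * (n + 1) ≤ q.natDegree := by
  classical
  have h1 : ∀ i, n + 1 ≤ q.roots.count (r i) := by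
    intro i; rw [Polynomial.count_roots]; exact hmul i
  calc k * (n + 1) = ∑ _i : Fin k, (n + 1) := by simp [mul_comm]
    _ ≤ ∑ i, q.roots.count (r i) := Finset.sum_le_sum fun i _ => h1 i
    _ = ∑ x ∈ Finset.univ.image r, q.roots.count x :=
        (Finset.sum_image (f := fun x => q.roots.count x) (g := r) (s := Finset.univ)
          (fun i _ j _ h => hr h)).symm
    _ ≤ Multiset.card q.roots := sum_count_le _ _
    _ ≤ q.natDegree := Polynomial.card_roots' q

lemma rootMult_of_derivs {q : Polynomial ℂ} (hq : q ≠ 0) {x : ℂ} {n : ℕ}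
    (h : ∀ m ≤ n, (Polynomial.derivative^[m] q).IsRoot x) : n < q.rootMultiplicity x :=
  Polynomial.lt_rootMultiplicity_of_isRoot_iterate_derivative_of_mem_nonZeroDivisors hq h
    (mem_nonZeroDivisors_of_ne_zero
      (by exact_mod_cast Nat.cast_ne_zero.mpr (Nat.factorial_ne_zero n)))

lemma keyA {d k : ℕ} (hd : 3 ≤ d) (hk : 2 ≤ k) {f : MvPolynomial (Fin 4) ℂ}
    (hf : f.IsHomogeneous d) (a b : Fin 4 → ℂ) (s t : Fin k → ℂ)
    (ht : ∀ i, t i ≠ 0)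
    (hdist : ∀ i j : Fin k, i ≠ j → ∀ c : ℂ,
        s i • a + t i • b ≠ c • (s j • a + t j • b))
    (hmult : ∀ i, MultAtLeast f (s i • a + t i • b) 3)
    (hdk : d - 1 < 2 * k) :
    ∀ u v : ℂ, MultAtLeast f (u • a + v • b) 2 := by
  set r : Fin k → ℂ := fun i => s i / t i with hr
  have hq : ∀ i, r i • a + b = (t i)⁻¹ • (s i • a + t i • b) := by
    intro i
    rw [smul_add, smul_smul, smul_smul, inv_mul_cancel₀ (ht i), one_smul, ← div_eq_inv_mul]
  have hvan : ∀ (g : MvPolynomial (Fin 4) ℂ) (n : ℕ), g.IsHomogeneous n →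
      (∀ i, eval (s i • a + t i • b) g = 0) → ∀ i, eval (r i • a + b) g = 0 := by
    intro g n hg h0 i
    rw [hq i, eval_smul_homog hg, h0 i, mul_zero]
  have h1 : ∀ m, (pderiv m f).IsHomogeneous (d - 1) := fun m => isHomog_pderiv hf m
  have h2 : ∀ m m', (pderiv m' (pderiv m f)).IsHomogeneous (d - 1 - 1) :=
    fun m m' => isHomog_pderiv (h1 m) m'
  have E0 : ∀ i, eval (r i • a + b) f = 0 :=
    hvan f d hf (fun i => by simpa [pderivList] using hmult i [] (by norm_num))
  have E1 : ∀ m i, eval (r i • a + b) (pderiv m f) = 0 := fun m =>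
    hvan _ _ (h1 m) (fun i => by simpa [pderivList] using hmult i [m] (by norm_num))
  have E2 : ∀ m m' i, eval (r i • a + b) (pderiv m' (pderiv m f)) = 0 := fun m m' =>
    hvan _ _ (h2 m m') (fun i => by simpa [pderivList] using hmult i [m, m'] (by norm_num))
  have hrinj : Function.Injective r := by
    intro i j hij
    by_contra hne
    apply hdist i j hne (t i * (t j)⁻¹)
    have e1 : s i • a + t i • b = t i • (r i • a + b) := by
      rw [hq i, smul_smul, mul_inv_cancel₀ (ht i), one_smul]
    rw [e1, hij, hq j, smul_smul]
  have hQf0 : ∀ i, (lineSubst a b f).eval (r i) = 0 := fun i => by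
    rw [lineSubst_eval]; exact E0 i
  have hQd : (lineSubst a b f).derivative
      = ∑ m, Polynomial.C (a m) * lineSubst a b (pderiv m f) := lineSubst_derivative a b f
  have hqm0 : ∀ m i, (lineSubst a b (pderiv m f)).eval (r i) = 0 := fun m i => by
    rw [lineSubst_eval]; exact E1 m i
  have hqm2 : ∀ m m' i, (lineSubst a b (pderiv m' (pderiv m f))).eval (r i) = 0 :=
    fun m m' i => by rw [lineSubst_eval]; exact E2 m m' i
  have hqmd0 : ∀ m i, ((lineSubst a b (pderiv m f)).derivative).eval (r i) = 0 := by
    intro m i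
    rw [lineSubst_derivative]
    simp [Polynomial.eval_finset_sum, hqm2]
  have hQd0 : ∀ i, ((lineSubst a b f).derivative).eval (r i) = 0 := by
    intro i
    rw [hQd]
    simp [Polynomial.eval_finset_sum, hqm0]
  have hQdd0 : ∀ i, (((lineSubst a b f).derivative).derivative).eval (r i) = 0 := by
    intro i
    rw [hQd, Polynomial.derivative_sum]
    simp only [Polynomial.derivative_C_mul]
    simp [Polynomial.eval_finset_sum, hqmd0]
  -- all first partials restrict to zero on the line
  have hmul_qm : ∀ m, lineSubst a b (pderiv m f) = 0 := by
    intro m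
    by_contra hne
    have hroots : ∀ i, 1 < (lineSubst a b (pderiv m f)).rootMultiplicity (r i) := by
      intro i
      apply rootMult_of_derivs hne
      intro j hj
      interval_cases j
      · simpa using hqm0 m i
      · simpa using hqmd0 m i
    have hb := mult_count hne r hrinj hroots
    have hdeg : (lineSubst a b (pderiv m f)).natDegree ≤ d - 1 :=
      lineSubst_natDegree_le a b ((h1 m).totalDegree_le)
    omega
  have hQf : lineSubst a b f = 0 := by
    by_contra hne
    have hroots : ∀ i, 2 < (lineSubst a b f).rootMultiplicity (r i) := by
      intro i
      apply rootMult_of_derivs hne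
      intro j hj
      interval_cases j
      · simpa using hQf0 i
      · simpa using hQd0 i
      · simp only [Function.iterate_succ_apply', Function.iterate_zero_apply]
        exact hQdd0 i
    have hb := mult_count hne r hrinj hroots
    have hdeg : (lineSubst a b f).natDegree ≤ d :=
      lineSubst_natDegree_le a b hf.totalDegree_le
    omega
  -- extend vanishing from the affine chart to the whole plane
  have ext : ∀ (g : MvPolynomial (Fin 4) ℂ) (n : ℕ), g.IsHomogeneous n →
      lineSubst a b g = 0 → ∀ u v : ℂ, eval (u • a + v • b) g = 0 := by
    intro g n hg hLg
    have hv : ∀ u v : ℂ, v ≠ 0 → eval (u • a + v • b) g = 0 := by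
      intro u v hvne
      have hvv : v * (u / v) = u := by field_simp
      have hsp : u • a + v • b = v • ((u / v) • a + b) := by
        rw [smul_add, smul_smul, hvv]
      rw [hsp, eval_smul_homog hg]
      have h0 : eval ((u / v) • a + b) g = 0 := by
        rw [← lineSubst_eval, hLg, Polynomial.eval_zero]
      rw [h0, mul_zero]
    intro u v
    by_cases hvz : v = 0
    · subst hvz
      have hP : lineSubst b (u • a) g = 0 := by
        apply Polynomial.eq_zero_of_infinite_isRoot
        have hinf : ({0}ᶜ : Set ℂ).Infinite :=
          Set.Finite.infinite_compl (Set.finite_singleton 0)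
        apply Set.Infinite.mono _ hinf
        intro x hx
        have hxne : x ≠ 0 := by simpa using hx
        show (lineSubst b (u • a) g).eval x = 0
        rw [lineSubst_eval]
        rw [show x • b + u • a = u • a + x • b from add_comm _ _]
        exact hv u x hxne
      have h0 := lineSubst_eval b (u • a) g 0
      rw [hP, Polynomial.eval_zero] at h0
      rw [show u • a + (0:ℂ) • b = (0:ℂ) • b + u • a from add_comm _ _]
      exact h0.symm
    · exact hv u v hvz
  intro u v l hlen
  rcases l with _ | ⟨m, _ | ⟨m', l'⟩⟩
  · simpa [pderivList] using ext f d hf hQf u v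
  · simpa [pderivList] using ext (pderiv m f) (d - 1) (h1 m) (hmul_qm m) u v
  · simp at hlen

lemma lineSing (d k : ℕ) (hd : 3 ≤ d) (hk : 2 ≤ k)
    (f : MvPolynomial (Fin 4) ℂ) (hf : f.IsHomogeneous d)
    (a b : Fin 4 → ℂ) (s t : Fin k → ℂ)
    (hdist : ∀ i j : Fin k, i ≠ j → ∀ c : ℂ,
        s i • a + t i • b ≠ c • (s j • a + t j • b))
    (hmult : ∀ i : Fin k, MultAtLeast f (s i • a + t i • b) 3)
    (hdk : d - 1 < 2 * k) :
    ∀ u v : ℂ, MultAtLeast f (u • a + v • b) 2 := by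
  obtain ⟨lam, hlam⟩ := Infinite.exists_notMem_finset (Finset.univ.image fun i => t i / s i)
  set a' : Fin 4 → ℂ := a + lam • b with ha'
  set t' : Fin k → ℂ := fun i => t i - lam * s i with ht'
  have hpt : ∀ i, s i • a' + t' i • b = s i • a + t i • b := by
    intro i
    rw [ha', ht', smul_add, smul_smul, add_assoc, ← add_smul]
    have : s i * lam + (t i - lam * s i) = t i := by ring
    rw [this]
  haveI : Nontrivial (Fin k) := Fin.nontrivial_iff_two_le.mpr hk
  have hpne : ∀ i, s i • a + t i • b ≠ 0 := by
    intro i h0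
    obtain ⟨j, hj⟩ := exists_ne i
    exact hdist i j (Ne.symm hj) 0 (by rw [h0, zero_smul])
  have ht'ne : ∀ i, t' i ≠ 0 := by
    intro i h0
    by_cases hs : s i = 0
    · rw [ht'] at h0
      simp only [hs, mul_zero, sub_zero] at h0
      exact hpne i (by rw [hs, h0]; simp)
    · apply hlam
      rw [Finset.mem_image]
      refine ⟨i, Finset.mem_univ i, ?_⟩
      rw [ht'] at h0
      simp only at h0
      rw [div_eq_iff hs]
      linear_combination h0
  have hres := keyA hd hk hf a' b s t' ht'ne
    (by intro i j hij c; rw [hpt i, hpt j]; exact hdist i j hij c)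
    (by intro i; rw [hpt i]; exact hmult i) hdk
  intro u v
  have hsp : u • a + v • b = u • a' + (v - lam * u) • b := by
    rw [ha', smul_add, smul_smul, add_assoc, ← add_smul]
    have : u * lam + (v - lam * u) = v := by ring
    rw [this]
  rw [hsp]
  exact hres u (v - lam * u)

end LineAux

open LineAux in
/-- If a surface `{f = 0}` of degree `d ≥ 3` has `k ≥ 2` distinct points of
multiplicity `≥ 3` on a line `L`, and `2k > d − 1`, then every point of `L` is a singular
point of the surface.  Consequently a degree-`d` surface whose only singularities are
ordinary triple points has at most `⌊(d−1)/2⌋` triple points on any line; for `d = 6`,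
at most two triple points lie on a line. -/
theorem triple_points_on_a_line :
    (∀ (d k : ℕ), 3 ≤ d → 2 ≤ k →
      ∀ f : MvPolynomial (Fin 4) ℂ, f ≠ 0 → f.IsHomogeneous d →
      ∀ a b : Fin 4 → ℂ, LinearIndependent ℂ ![a, b] →
      ∀ s t : Fin k → ℂ,
        (∀ i j : Fin k, i ≠ j → ∀ c : ℂ,
          s i • a + t i • b ≠ c • (s j • a + t j • b)) →
        (∀ i : Fin k, MultAtLeast f (s i • a + t i • b) 3) →
        d - 1 < 2 * k →
        ∀ u v : ℂ, SingularAt f (u • a + v • b)) ∧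
    (∀ (d k : ℕ), 3 ≤ d →
      ∀ f : MvPolynomial (Fin 4) ℂ, f ≠ 0 → f.IsHomogeneous d →
      (SingSet f).Finite → (∀ P ∈ SingSet f, OrdinaryTriplePointAt d f P.rep) →
      ∀ a b : Fin 4 → ℂ, LinearIndependent ℂ ![a, b] →
      ∀ s t : Fin k → ℂ,
        (∀ i j : Fin k, i ≠ j → ∀ c : ℂ,
          s i • a + t i • b ≠ c • (s j • a + t j • b)) →
        (∀ i : Fin k, OrdinaryTriplePointAt d f (s i • a + t i • b)) →
        k ≤ (d - 1) / 2 ∧ (d = 6 → k ≤ 2)) := by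
  constructor
  · intro d k hd hk f hf0 hf a b hab s t hdist hmult hdk u v
    exact lineSing d k hd hk f hf a b s t hdist hmult hdk u v
  · intro d k hd f hf0 hf hfin hsing a b hab s t hdist htri
    have main : k ≤ (d - 1) / 2 := by
      by_contra hgt
      push_neg at hgt
      have hk2 : 2 ≤ k := by omega
      have hdk : d - 1 < 2 * k := by omega
      have hsl := lineSing d k hd hk2 f hf a b s t hdist (fun i => (htri i).1) hdk
      have hne : ∀ c : ℂ, a + c • b ≠ 0 := by
        intro c h0
        have h1 : (1 : ℂ) • a + c • b = 0 := by rw [one_smul]; exact h0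
        exact one_ne_zero (LinearIndependent.pair_iff.mp hab 1 c h1).1
      have hinj : Function.Injective
          (fun c : ℂ => Projectivization.mk ℂ (a + c • b) (hne c)) := by
        intro c c' hcc
        simp only [Projectivization.mk_eq_mk_iff] at hcc
        obtain ⟨u, hu⟩ := hcc
        rw [Units.smul_def, smul_add, smul_smul] at hu
        have key : ((u : ℂ) - 1) • a + ((u : ℂ) * c' - c) • b = 0 := by
          rw [sub_smul, sub_smul, one_smul, sub_add_sub_comm, hu, sub_self]
        obtain ⟨h1, h2⟩ := LinearIndependent.pair_iff.mp hab _ _ key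
        have hu1 : (u : ℂ) = 1 := sub_eq_zero.mp h1
        have : c = c' := by
          have := sub_eq_zero.mp h2
          rw [hu1, one_mul] at this
          exact this.symm
        exact this
      have hmem : ∀ c : ℂ, Projectivization.mk ℂ (a + c • b) (hne c) ∈ SingSet f := by
        intro c
        obtain ⟨u, hu⟩ := Projectivization.exists_smul_eq_mk_rep ℂ (a + c • b) (hne c)
        have hrep : (Projectivization.mk ℂ (a + c • b) (hne c)).rep
            = (u : ℂ) • a + ((u : ℂ) * c) • b := by
          rw [← hu, Units.smul_def, smul_add, smul_smul]
        show SingularAt f _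
        rw [hrep]
        exact hsl (u : ℂ) ((u : ℂ) * c)
      exact (Set.infinite_of_injective_forall_mem hinj hmem) hfin
    exact ⟨main, fun h6 => by subst h6; omega⟩
end
end

section
/- Let f ∈ ℂ[x₀,x₁,x₂,x₃] be a nonzero homogeneous polynomial of degree 4 and suppose the surface X = {f = 0} has two distinct points P ≠ Q, each of multiplicity ≥ 3 on X. Then every point of the line through P and Q is a singular point of X. In particular, a quartic surface in ℙ³(ℂ) with only isolated singularities has at most one ordinary triple point, i.e. μ₃(4) = 1. -/
open MvPolynomial

noncomputable section

namespace QTP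

lemma pderivList_cons {n : ℕ} (i : Fin n) (l : List (Fin n)) (f : MvPolynomial (Fin n) ℂ) :
    pderivList (i :: l) f = pderivList l (pderiv i f) := rfl

lemma pderivList_C_mul {n : ℕ} (l : List (Fin n)) (a : ℂ) (f : MvPolynomial (Fin n) ℂ) :
    pderivList l (C a * f) = C a * pderivList l f := by
  induction l generalizing f with
  | nil => rfl
  | cons i t ih => rw [pderivList_cons, pderiv_C_mul, ih, pderivList_cons]

lemma pderivList_sum {n : ℕ} {ι : Type*} (l : List (Fin n)) (s : Finset ι)
    (g : ι → MvPolynomial (Fin n) ℂ) :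
    pderivList l (∑ i ∈ s, g i) = ∑ i ∈ s, pderivList l (g i) := by
  induction l generalizing g with
  | nil => rfl
  | cons i t ih =>
      rw [pderivList_cons, map_sum (pderiv i), ih]
      rfl

/-- Directional derivative in direction `b`. -/
def dirD {n : ℕ} (b : Fin n → ℂ) (f : MvPolynomial (Fin n) ℂ) : MvPolynomial (Fin n) ℂ :=
  ∑ i, C (b i) * pderiv i f

lemma multAtLeast_dirD {n k : ℕ} {f : MvPolynomial (Fin n) ℂ} {p b : Fin n → ℂ}
    (h : MultAtLeast f p (k + 1)) : MultAtLeast (dirD b f) p k := by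
  intro l hl
  rw [dirD, pderivList_sum, map_sum]
  refine Finset.sum_eq_zero fun i _ => ?_
  rw [pderivList_C_mul, map_mul, eval_C, ← pderivList_cons,
    h (i :: l) (by simpa using Nat.succ_lt_succ hl), mul_zero]

lemma multAtLeast_dirD_iterate {n : ℕ} {f : MvPolynomial (Fin n) ℂ} {p b : Fin n → ℂ}
    {k m : ℕ} (h : MultAtLeast f p (k + m)) : MultAtLeast ((dirD b)^[m] f) p k := by
  induction m generalizing f with
  | zero => simpa using h
  | succ m ih =>
      rw [Function.iterate_succ_apply]
      exact ih (multAtLeast_dirD (by rw [Nat.add_assoc]; exact h))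

end QTP

namespace QTP

lemma derivative_aeval_line {n : ℕ} (s : Fin n → Polynomial ℂ) (f : MvPolynomial (Fin n) ℂ) :
    Polynomial.derivative (aeval s f) =
      ∑ i, aeval s (pderiv i f) * Polynomial.derivative (s i) := by
  induction f using MvPolynomial.induction_on with
  | C a => simp
  | add f g hf hg => simp only [map_add, hf, hg, add_mul, Finset.sum_add_distrib]
  | mul_X f i hf =>
      simp only [map_mul, aeval_X, Polynomial.derivative_mul, hf, pderiv_mul]
      rw [Finset.sum_mul]
      have hcong : ∀ j ∈ Finset.univ, (aeval s) (pderiv j f * X i + f * pderiv j (X i)) *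
            Polynomial.derivative (s j)
          = (aeval s) (pderiv j f) * Polynomial.derivative (s j) * s i
            + (if j = i then (aeval s) f * Polynomial.derivative (s i) else 0) := by
        intro j _
        by_cases hji : j = i
        · subst hji
          simp only [pderiv_X_self, mul_one, map_add, map_mul, aeval_X, if_true]
          ring
        · rw [pderiv_X_of_ne (Ne.symm hji)]
          simp only [mul_zero, add_zero, map_mul, aeval_X, if_neg hji]
          ring
      rw [Finset.sum_congr rfl hcong, Finset.sum_add_distrib,
        Finset.sum_ite_eq' Finset.univ i (fun _ => (aeval s) f * Polynomial.derivative (s i))]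
      simp [add_comm]

/-- Restriction of `f` to the line `t ↦ a + t b`, as a univariate polynomial. -/
def linePoly {n : ℕ} (a b : Fin n → ℂ) (f : MvPolynomial (Fin n) ℂ) : Polynomial ℂ :=
  aeval (fun i => Polynomial.C (a i) + Polynomial.C (b i) * Polynomial.X) f

lemma derivative_linePoly {n : ℕ} (a b : Fin n → ℂ) (f : MvPolynomial (Fin n) ℂ) :
    Polynomial.derivative (linePoly a b f) = linePoly a b (dirD b f) := by
  rw [linePoly, derivative_aeval_line, linePoly, dirD, map_sum]
  refine Finset.sum_congr rfl fun i _ => ?_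
  rw [map_mul, aeval_C, Polynomial.algebraMap_eq]
  simp only [Polynomial.derivative_add, Polynomial.derivative_C, Polynomial.derivative_mul,
    Polynomial.derivative_X, zero_add, mul_one, zero_mul, add_zero]
  ring

lemma iterate_derivative_linePoly {n : ℕ} (a b : Fin n → ℂ) (f : MvPolynomial (Fin n) ℂ)
    (m : ℕ) :
    Polynomial.derivative^[m] (linePoly a b f) = linePoly a b ((dirD b)^[m] f) := by
  induction m generalizing f with
  | zero => rfl
  | succ m ih =>
      rw [Function.iterate_succ_apply, Function.iterate_succ_apply, ← ih, derivative_linePoly]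

lemma aeval_eq_eval' {n : ℕ} (g : Fin n → ℂ) (f : MvPolynomial (Fin n) ℂ) :
    aeval g f = eval g f := by
  rw [← coe_aeval_eq_eval]
  rfl

lemma eval_zero_linePoly {n : ℕ} (a b : Fin n → ℂ) (f : MvPolynomial (Fin n) ℂ) :
    (linePoly a b f).eval 0 = eval a f := by
  have h := MvPolynomial.comp_aeval_apply
    (f := fun i => Polynomial.C (a i) + Polynomial.C (b i) * Polynomial.X)
    (Polynomial.aeval (0:ℂ)) f
  rw [← Polynomial.coe_aeval_eq_eval, linePoly]
  rw [h]
  simp only [map_add, map_mul, Polynomial.aeval_C, Polynomial.aeval_X, mul_zero, add_zero,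
    Algebra.algebraMap_self, RingHom.id_apply]
  exact aeval_eq_eval' a f

lemma coeff_linePoly_eq_zero {n : ℕ} {f : MvPolynomial (Fin n) ℂ} {a b : Fin n → ℂ} {k m : ℕ}
    (h : MultAtLeast f a k) (hm : m < k) : (linePoly a b f).coeff m = 0 := by
  have h1 : (Polynomial.derivative^[m] (linePoly a b f)).eval 0 = 0 := by
    rw [iterate_derivative_linePoly, eval_zero_linePoly]
    exact multAtLeast_dirD_iterate (k := k - m) (b := b)
      (by rw [show k - m + m = k by omega]; exact h) [] (by simp; omega)
  rw [← Polynomial.coeff_zero_eq_eval_zero, Polynomial.coeff_iterate_derivative] at h1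
  simp only [zero_add, Nat.descFactorial_self, nsmul_eq_mul] at h1
  have : ((m.factorial : ℂ)) ≠ 0 := Nat.cast_ne_zero.2 (Nat.factorial_ne_zero m)
  exact (mul_eq_zero.1 h1).resolve_left this

end QTP

namespace QTP

lemma weight_two (w : Fin 2 →₀ ℕ) : (Finsupp.weight (1 : Fin 2 → ℕ)) w = w 0 + w 1 := by
  rw [Finsupp.weight_apply, Finsupp.sum_fintype _ _ (by simp), Fin.sum_univ_two]
  simp

lemma coeff_binary_homog {G : MvPolynomial (Fin 2) ℂ} {d : ℕ} (hG : G.IsHomogeneous d)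
    {w : Fin 2 →₀ ℕ} (hw : w ∈ G.support) (r : Fin 2) :
    coeff w G =
      ((aeval (fun j => if j = r then Polynomial.X else 1) G : Polynomial ℂ)).coeff (w r) := by
  conv_rhs => rw [G.as_sum]
  rw [map_sum, Polynomial.finset_sum_coeff]
  have hterm : ∀ w' : Fin 2 →₀ ℕ,
      (aeval (fun j => if j = r then Polynomial.X else 1) (monomial w' (coeff w' G)) : Polynomial ℂ)
        = Polynomial.C (coeff w' G) * Polynomial.X ^ (w' r) := by
    intro w'
    rw [aeval_monomial, Finsupp.prod_fintype _ _ (fun _ => pow_zero _), Fin.prod_univ_two]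
    fin_cases r <;> simp [Polynomial.algebraMap_eq]
  have hdeg : ∀ w' : Fin 2 →₀ ℕ, w' ∈ G.support → w' 0 + w' 1 = d := by
    intro w' hw'
    rw [← weight_two]
    exact hG (mem_support_iff.1 hw')
  have hz : ∀ w' ∈ G.support, w' ≠ w →
      ((aeval (fun j => if j = r then Polynomial.X else 1)
        (monomial w' (coeff w' G)) : Polynomial ℂ)).coeff (w r) = 0 := by
    intro w' hw' hne
    rw [hterm, Polynomial.coeff_C_mul, Polynomial.coeff_X_pow]
    have hthis : ¬ w' r = w r := by
      intro hr
      apply hne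
      have h0 := hdeg w' hw'
      have h1 := hdeg w hw
      have h2 : r = 0 ∨ r = 1 := by
        fin_cases r
        · exact Or.inl rfl
        · exact Or.inr rfl
      have h01 : w' 0 = w 0 ∧ w' 1 = w 1 := by
        rcases h2 with rfl | rfl
        · exact ⟨hr, by omega⟩
        · exact ⟨by omega, hr⟩
      ext j
      fin_cases j
      · exact h01.1
      · exact h01.2
    rw [if_neg (fun h => hthis h.symm), mul_zero]
  rw [Finset.sum_eq_single_of_mem w hw hz, hterm, Polynomial.coeff_C_mul,
    Polynomial.coeff_X_pow, if_pos rfl, mul_one]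

/-- The key vanishing lemma: a form of degree `d < 2k` with multiplicity `≥ k`
at two points vanishes along the whole line joining them. -/
lemma key {n : ℕ} {f : MvPolynomial (Fin n) ℂ} {d k : ℕ} (hf : f.IsHomogeneous d)
    (hdk : d < 2 * k) {p q : Fin n → ℂ}
    (hp : MultAtLeast f p k) (hq : MultAtLeast f q k) (u v : ℂ) :
    eval (u • p + v • q) f = 0 := by
  set s2 : Fin n → MvPolynomial (Fin 2) ℂ := fun i => C (p i) * X 0 + C (q i) * X 1 with hs2
  have hG : (aeval s2 f).IsHomogeneous d := by
    have h1 : ∀ i, (s2 i).IsHomogeneous 1 := fun i =>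
      ((isHomogeneous_X _ _).C_mul _).add ((isHomogeneous_X _ _).C_mul _)
    simpa using hf.aeval s2 h1
  have hΦ : (aeval (fun j : Fin 2 => if j = (1 : Fin 2) then Polynomial.X else 1)
      (aeval s2 f) : Polynomial ℂ) = linePoly p q f := by
    rw [comp_aeval_apply, linePoly]
    have : (fun i => (aeval (fun j : Fin 2 => if j = (1 : Fin 2) then Polynomial.X else 1))
          (s2 i))
        = fun i => Polynomial.C (p i) + Polynomial.C (q i) * Polynomial.X := by
      funext i
      simp [hs2, Polynomial.algebraMap_eq]
    rw [this]
  have hΨ : (aeval (fun j : Fin 2 => if j = (0 : Fin 2) then Polynomial.X else 1)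
      (aeval s2 f) : Polynomial ℂ) = linePoly q p f := by
    rw [comp_aeval_apply, linePoly]
    have : (fun i => (aeval (fun j : Fin 2 => if j = (0 : Fin 2) then Polynomial.X else 1))
          (s2 i))
        = fun i => Polynomial.C (q i) + Polynomial.C (p i) * Polynomial.X := by
      funext i
      simp [hs2, Polynomial.algebraMap_eq]
      ring
    rw [this]
  have hG0 : aeval s2 f = 0 := by
    rw [eq_zero_iff]
    intro w
    by_cases hw : w ∈ (aeval s2 f).support
    · have hsum : w 0 + w 1 = d := by
        rw [← weight_two]; exact hG (mem_support_iff.1 hw)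
      by_cases h1 : w 1 < k
      · rw [coeff_binary_homog hG hw 1, hΦ]
        exact coeff_linePoly_eq_zero hp h1
      · rw [coeff_binary_homog hG hw 0, hΨ]
        exact coeff_linePoly_eq_zero hq (by omega)
    · exact notMem_support_iff.1 hw
  have hev := congrArg (aeval (![u, v] : Fin 2 → ℂ)) hG0
  rw [map_zero, comp_aeval_apply] at hev
  have hfun : (fun i => (aeval (![u, v] : Fin 2 → ℂ)) (s2 i)) = (u • p + v • q) := by
    funext i
    simp [hs2, Pi.add_apply, Pi.smul_apply, smul_eq_mul]
    ring
  rw [hfun] at hev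
  rw [← aeval_eq_eval']
  exact hev

end QTP

namespace QTP

lemma degree_fin {n : ℕ} (w : Fin n →₀ ℕ) : w.degree = ∑ j, w j :=
  Finset.sum_subset (Finset.subset_univ _)
    (fun j _ hj => Finsupp.notMem_support_iff.1 hj)

lemma degree_add_fin {n : ℕ} (a b : Fin n →₀ ℕ) :
    (a + b).degree = a.degree + b.degree := by
  simp only [degree_fin, Finsupp.add_apply, Finset.sum_add_distrib]

lemma degree_single_fin {n : ℕ} (i : Fin n) : (Finsupp.single i 1).degree = 1 := by
  simp [degree_fin, Finsupp.single_apply]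

lemma isHomogeneous_pderiv {n e : ℕ} {f : MvPolynomial (Fin n) ℂ}
    (hf : f.IsHomogeneous (e + 1)) (i : Fin n) : (pderiv i f).IsHomogeneous e := by
  have hrw : pderiv i f
      = ∑ w ∈ f.support, monomial (w - Finsupp.single i 1) (coeff w f * (w i : ℂ)) := by
    conv_lhs => rw [f.as_sum]
    rw [map_sum]
    exact Finset.sum_congr rfl fun w _ => pderiv_monomial
  rw [hrw]
  apply IsHomogeneous.sum
  intro w hw
  by_cases hwi : w i = 0
  · rw [hwi]
    simp only [Nat.cast_zero, mul_zero, map_zero]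
    exact isHomogeneous_zero _ _ _
  · apply isHomogeneous_monomial
    have hdw : w.degree = e + 1 := by
      rw [Finsupp.degree_eq_weight_one]
      exact (hf (mem_support_iff.1 hw))
    have hle : Finsupp.single i 1 ≤ w := by
      rw [Finsupp.single_le_iff]
      omega
    have hcanc : (w - Finsupp.single i 1) + Finsupp.single i 1 = w :=
      tsub_add_cancel_of_le hle
    have := congrArg Finsupp.degree hcanc
    rw [degree_add_fin, degree_single_fin] at this
    omega

end QTP

namespace QTP

lemma multAtLeast_pderiv {n k : ℕ} {f : MvPolynomial (Fin n) ℂ} {p : Fin n → ℂ} (i : Fin n)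
    (h : MultAtLeast f p (k + 1)) : MultAtLeast (pderiv i f) p k := by
  intro l hl
  rw [← pderivList_cons]
  exact h (i :: l) (by simpa using Nat.succ_lt_succ hl)

lemma line_singular {f : MvPolynomial (Fin 4) ℂ} (hhom : f.IsHomogeneous 4)
    {p q : Fin 4 → ℂ} (hp : MultAtLeast f p 3) (hq : MultAtLeast f q 3) (u v : ℂ) :
    MultAtLeast f (u • p + v • q) 2 := by
  have hhom' : f.IsHomogeneous (3 + 1) := hhom
  intro l hl
  rcases l with _ | ⟨i, l'⟩
  · exact key hhom (by norm_num) hp hq u v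
  · rcases l' with _ | ⟨j, l''⟩
    · show eval _ (pderiv i f) = 0
      exact key (isHomogeneous_pderiv hhom' i) (by norm_num)
        (multAtLeast_pderiv i hp) (multAtLeast_pderiv i hq) u v
    · simp only [List.length_cons] at hl
      omega

end QTP

namespace QTP

lemma at_most_one (f : MvPolynomial (Fin 4) ℂ) (hf4 : f.IsHomogeneous 4)
    (hfin : (SingSet f).Finite)
    (S : Set (Projectivization ℂ (Fin 4 → ℂ)))
    (hS : ∀ P ∈ S, MultAtLeast f P.rep 3) : S.ncard ≤ 1 := by
  have hsub : S ⊆ SingSet f := by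
    intro P hP l hl
    exact hS P hP l (by omega)
  have hfin2 := hfin.subset hsub
  rw [Set.ncard_le_one hfin2]
  intro P hP Q hQ
  by_contra hne
  set p := P.rep with hpdef
  set q := Q.rep with hqdef
  have hp0 : p ≠ 0 := P.rep_nonzero
  have hq0 : q ≠ 0 := Q.rep_nonzero
  have hind : ∀ c : ℂ, p ≠ c • q := by
    intro c hc
    apply hne
    have hc0 : c ≠ 0 := by
      rintro rfl
      rw [zero_smul] at hc
      exact hp0 hc
    have hmk : Projectivization.mk ℂ p hp0 = Projectivization.mk ℂ q hq0 := by
      rw [Projectivization.mk_eq_mk_iff]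
      refine ⟨Units.mk0 c hc0, ?_⟩
      rw [Units.smul_def]
      exact hc.symm
    rw [← Projectivization.mk_rep P, ← Projectivization.mk_rep Q]
    exact hmk
  have hsing : ∀ u v : ℂ, MultAtLeast f (u • p + v • q) 2 :=
    fun u v => line_singular hf4 (hS P hP) (hS Q hQ) u v
  have hptq : ∀ t : ℂ, p + t • q ≠ 0 := by
    intro t h
    apply hind (-t)
    rw [add_eq_zero_iff_eq_neg.mp h, neg_smul]
  have hmem : ∀ t : ℂ, Projectivization.mk ℂ (p + t • q) (hptq t) ∈ SingSet f := by
    intro t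
    obtain ⟨a, ha⟩ := Projectivization.exists_smul_eq_mk_rep ℂ (p + t • q) (hptq t)
    show MultAtLeast f _ 2
    rw [← ha, Units.smul_def]
    have hexp : (a : ℂ) • (p + t • q) = (a : ℂ) • p + ((a : ℂ) * t) • q := by
      rw [smul_add, smul_smul]
    rw [hexp]
    exact hsing _ _
  have hinj : Function.Injective (fun t : ℂ => Projectivization.mk ℂ (p + t • q) (hptq t)) := by
    intro t t' h
    simp only at h
    rw [Projectivization.mk_eq_mk_iff] at h
    obtain ⟨a, ha⟩ := h
    rw [Units.smul_def] at ha
    have ha' : (a : ℂ) • p + ((a : ℂ) * t') • q = p + t • q := by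
      rw [← smul_smul, ← smul_add]
      exact ha
    by_cases h1 : (a : ℂ) = 1
    · rw [h1, one_smul, one_mul] at ha'
      have h2 : t' • q = t • q := add_left_cancel ha'
      have h3 : (t' - t) • q = 0 := by rw [sub_smul, h2, sub_self]
      rcases smul_eq_zero.mp h3 with h4 | h4
      · exact (sub_eq_zero.mp h4).symm
      · exact absurd h4 hq0
    · exfalso
      have h5 : ((a : ℂ) - 1) • p = (t - (a : ℂ) * t') • q := by
        have := congrArg (fun x => x - p - ((a : ℂ) * t') • q) ha'
        rw [sub_smul, one_smul, sub_smul]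
        abel_nf
        abel_nf at this
        linear_combination (norm := module) this
      apply hind (((a : ℂ) - 1)⁻¹ * (t - (a : ℂ) * t'))
      have h6 : (a : ℂ) - 1 ≠ 0 := sub_ne_zero.mpr h1
      rw [← smul_smul, ← h5, smul_smul, inv_mul_cancel₀ h6, one_smul]
  exact Set.infinite_of_injective_forall_mem hinj hmem hfin
end QTP


/-- A quartic surface with two distinct points of multiplicity `≥ 3` is
singular along the whole line joining them; in particular a quartic with only isolated
singularities has at most one ordinary triple point, i.e. `μ₃(4) = 1`. -/
theorem quartic_triple_points :
    (∀ f : MvPolynomial (Fin 4) ℂ, f ≠ 0 → f.IsHomogeneous 4 →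
      ∀ p q : Fin 4 → ℂ, p ≠ 0 → q ≠ 0 → (∀ c : ℂ, p ≠ c • q) →
      MultAtLeast f p 3 → MultAtLeast f q 3 →
      ∀ u v : ℂ, SingularAt f (u • p + v • q)) ∧
    (∀ f : MvPolynomial (Fin 4) ℂ, f ≠ 0 → f.IsHomogeneous 4 →
      (SingSet f).Finite →
      {P : Projectivization ℂ (Fin 4 → ℂ) | OrdinaryTriplePointAt 4 f P.rep}.ncard ≤ 1) := by
  constructor
  · intro f _ hf4 p q _ _ _ hp hq u v
    exact QTP.line_singular hf4 hp hq u v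
  · intro f _ hf4 hfin
    exact QTP.at_most_one f hf4 hfin _ (fun P hP => hP.1)
end
end

section
/- Let f ∈ ℂ[x₀,x₁,x₂,x₃] be a nonzero homogeneous polynomial of degree 3 such that the surface X = {f = 0} has an ordinary triple point at P. Then, after a linear change of coordinates taking a representative of P to (0,0,0,1), f is a polynomial in x₀, x₁, x₂ only (X is a cone with vertex P), f is a nonsingular ternary cubic form (so X is the cone over a smooth plane cubic curve), and P is the unique singular point of X. In particular μ₃(3) = 1. -/
open MvPolynomial

noncomputable section

namespace CubicAux

open Finset

variable {n : ℕ}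

lemma pderivList_nil (f : MvPolynomial (Fin n) ℂ) : pderivList [] f = f := rfl

lemma pderivList_cons (i : Fin n) (l : List (Fin n)) (f : MvPolynomial (Fin n) ℂ) :
    pderivList (i :: l) f = pderivList l (pderiv i f) := rfl

lemma pderivList_add (l : List (Fin n)) (f g : MvPolynomial (Fin n) ℂ) :
    pderivList l (f + g) = pderivList l f + pderivList l g := by
  induction l generalizing f g with
  | nil => rfl
  | cons i t ih => rw [pderivList_cons, pderivList_cons, pderivList_cons, map_add, ih]

lemma pderivList_zero (l : List (Fin n)) : pderivList l (0 : MvPolynomial (Fin n) ℂ) = 0 := by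
  induction l with
  | nil => rfl
  | cons i t ih => rw [pderivList_cons, map_zero, ih]

lemma pderivList_C_mul (l : List (Fin n)) (a : ℂ) (f : MvPolynomial (Fin n) ℂ) :
    pderivList l (MvPolynomial.C a * f) = MvPolynomial.C a * pderivList l f := by
  induction l generalizing f with
  | nil => rfl
  | cons i t ih => rw [pderivList_cons, pderiv_C_mul, ih, pderivList_cons]

lemma pderivList_sum {α : Type*} (s : Finset α) (h : α → MvPolynomial (Fin n) ℂ)
    (l : List (Fin n)) :
    pderivList l (∑ j ∈ s, h j) = ∑ j ∈ s, pderivList l (h j) := by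
  classical
  induction s using Finset.induction_on with
  | empty => simpa using pderivList_zero l
  | insert _ _ hx ih => rw [Finset.sum_insert hx, Finset.sum_insert hx, pderivList_add, ih]

lemma eval_substMatrix (B : Matrix (Fin n) (Fin n) ℂ) (q : Fin n → ℂ)
    (f : MvPolynomial (Fin n) ℂ) :
    MvPolynomial.eval q (substMatrix B f) = MvPolynomial.eval (B.mulVec q) f := by
  induction f using MvPolynomial.induction_on with
  | C a => simp [substMatrix]
  | add p q hp hq =>
      simp only [substMatrix] at hp hq ⊢
      rw [map_add, map_add, map_add, hp, hq]
  | mul_X p j hp =>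
      simp only [substMatrix] at hp ⊢
      rw [map_mul, map_mul, hp, aeval_X]
      congr 1
      simp [Matrix.mulVec, dotProduct]

lemma pderiv_substMatrix (B : Matrix (Fin n) (Fin n) ℂ) (i : Fin n)
    (f : MvPolynomial (Fin n) ℂ) :
    pderiv i (substMatrix B f) =
      ∑ j, MvPolynomial.C (B j i) * substMatrix B (pderiv j f) := by
  induction f using MvPolynomial.induction_on with
  | C a => simp [substMatrix]
  | add p q hp hq =>
      simp only [substMatrix] at hp hq ⊢
      simp only [map_add, mul_add, Finset.sum_add_distrib, hp, hq]
  | mul_X p j hp =>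
      have hXj : MvPolynomial.aeval (R := ℂ)
          (fun i => ∑ j, MvPolynomial.C (B i j) * MvPolynomial.X j) (MvPolynomial.X j)
          = ∑ k, MvPolynomial.C (B j k) * MvPolynomial.X k := by
        simp
      have hd : pderiv i (∑ k, MvPolynomial.C (B j k) * MvPolynomial.X k
          : MvPolynomial (Fin n) ℂ) = MvPolynomial.C (B j i) := by
        rw [map_sum, Finset.sum_eq_single i]
        · simp [pderiv_C_mul]
        · intro b _ hb
          rw [pderiv_C_mul, pderiv_X_of_ne hb, mul_zero]
        · simp
      simp only [substMatrix] at hp ⊢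
      rw [map_mul, hXj, pderiv_mul, hd, hp]
      have hterm : ∀ m : Fin n,
          MvPolynomial.C (B m i) * MvPolynomial.aeval
            (fun i => ∑ j, MvPolynomial.C (B i j) * MvPolynomial.X j)
            (pderiv m (p * MvPolynomial.X j)) =
          (MvPolynomial.C (B m i) * MvPolynomial.aeval
            (fun i => ∑ j, MvPolynomial.C (B i j) * MvPolynomial.X j) (pderiv m p))
            * (∑ k, MvPolynomial.C (B j k) * MvPolynomial.X k) +
          (if m = j then
            MvPolynomial.C (B m i) * MvPolynomial.aeval
              (fun i => ∑ j, MvPolynomial.C (B i j) * MvPolynomial.X j) p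
           else 0) := by
        intro m
        rw [pderiv_mul]
        by_cases hmj : m = j
        · subst hmj
          simp only [pderiv_X_self, mul_one, map_add, map_mul, hXj, eq_self_iff_true,
            if_true]
          ring
        · rw [pderiv_X_of_ne (Ne.symm hmj), mul_zero, add_zero, if_neg hmj, add_zero,
            map_mul, hXj]
          ring
      rw [Finset.sum_congr rfl fun m _ => hterm m, Finset.sum_add_distrib,
        Finset.sum_ite_eq' Finset.univ j]
      simp only [Finset.mem_univ, if_pos, ← Finset.sum_mul]
      ring

lemma multAtLeast_subst (B : Matrix (Fin n) (Fin n) ℂ) (pp q : Fin n → ℂ)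
    (hq : B.mulVec q = pp) :
    ∀ (l : List (Fin n)) (f : MvPolynomial (Fin n) ℂ),
      (∀ l' : List (Fin n), l'.length = l.length →
        MvPolynomial.eval pp (pderivList l' f) = 0) →
      MvPolynomial.eval q (pderivList l (substMatrix B f)) = 0 := by
  intro l
  induction l with
  | nil =>
      intro f h
      rw [pderivList_nil, eval_substMatrix, hq]
      exact h [] rfl
  | cons i t ih =>
      intro f h
      rw [pderivList_cons, pderiv_substMatrix, pderivList_sum, map_sum]
      apply Finset.sum_eq_zero
      intro j _
      rw [pderivList_C_mul, map_mul, eval_C]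
      have := ih (pderiv j f) (fun l' hl' => by
        have := h (j :: l') (by simp [hl'])
        rwa [pderivList_cons] at this)
      rw [this, mul_zero]

lemma degree_sub_single {v : Fin n →₀ ℕ} {i : Fin n} (h : v i ≠ 0) :
    (v - Finsupp.single i 1).degree = v.degree - 1 := by
  have h1 : Finsupp.single i 1 ≤ v :=
    Finsupp.single_le_iff.mpr (Nat.one_le_iff_ne_zero.mpr h)
  have h2 : (v - Finsupp.single i 1) + Finsupp.single i 1 = v := tsub_add_cancel_of_le h1
  have h3 : (Finsupp.single i (1:ℕ)).degree = 1 := by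
    simp [Finsupp.degree_apply, Finsupp.support_single_ne_zero _ one_ne_zero]
  have hadd : ∀ a b : Fin n →₀ ℕ, (a + b).degree = a.degree + b.degree := by
    intro a b
    simp only [Finsupp.degree_eq_weight_one, map_add]
  have h4 := congrArg Finsupp.degree h2
  rw [hadd, h3] at h4
  omega

lemma degree_of_mem_support {f : MvPolynomial (Fin n) ℂ} {N : ℕ}
    (hf : f.IsHomogeneous N) {v : Fin n →₀ ℕ} (hv : v ∈ f.support) : v.degree = N := by
  rw [Finsupp.degree_eq_weight_one]
  exact hf (MvPolynomial.mem_support_iff.mp hv)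

lemma isHomogeneous_pderiv {f : MvPolynomial (Fin n) ℂ} {N : ℕ}
    (hf : f.IsHomogeneous N) (i : Fin n) : (pderiv i f).IsHomogeneous (N - 1) := by
  rw [f.as_sum, map_sum]
  apply MvPolynomial.IsHomogeneous.sum
  intro v hv
  rw [pderiv_monomial]
  by_cases h : v i = 0
  · simpa [h] using MvPolynomial.isHomogeneous_zero (Fin n) ℂ (N - 1)
  · apply MvPolynomial.isHomogeneous_monomial
    rw [degree_sub_single h, degree_of_mem_support hf hv]

lemma euler {N : ℕ} (f : MvPolynomial (Fin n) ℂ) (hf : f.IsHomogeneous N) :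
    ∑ i, MvPolynomial.X i * pderiv i f = MvPolynomial.C (N : ℂ) * f := by
  conv_lhs => rw [f.as_sum]
  conv_rhs => rw [f.as_sum]
  simp only [map_sum, Finset.mul_sum]
  rw [Finset.sum_comm]
  apply Finset.sum_congr rfl
  intro v hv
  have hdeg : v.degree = N := degree_of_mem_support hf hv
  have step1 : ∀ i : Fin n, MvPolynomial.X i * pderiv i
      (MvPolynomial.monomial v (f.coeff v)) =
      MvPolynomial.monomial v (f.coeff v * (v i : ℂ)) := by
    intro i
    rw [pderiv_monomial]
    by_cases h : v i = 0
    · simp [h]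
    · have : (MvPolynomial.X i : MvPolynomial (Fin n) ℂ) =
        MvPolynomial.monomial (Finsupp.single i 1) 1 := by
        rw [MvPolynomial.X]
      have h1 : Finsupp.single i 1 ≤ v :=
        Finsupp.single_le_iff.mpr (Nat.one_le_iff_ne_zero.mpr h)
      have h2 : Finsupp.single i 1 + (v - Finsupp.single i 1) = v := by
        rw [add_comm]; exact tsub_add_cancel_of_le h1
      rw [this, MvPolynomial.monomial_mul, one_mul, h2]
  rw [Finset.sum_congr rfl fun i _ => step1 i]
  rw [← map_sum, ← Finset.mul_sum]
  rw [MvPolynomial.C_mul_monomial]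
  congr 1
  · rw [mul_comm]
    congr 1
    rw [show ∑ i : Fin n, (v i : ℂ) = ((∑ i : Fin n, v i : ℕ) : ℂ) by push_cast; ring]
    congr 1
    rw [← hdeg, Finsupp.degree_apply]
    exact (Finset.sum_subset (Finset.subset_univ _) (fun x _ hx => by
      simpa using Finsupp.notMem_support_iff.mp hx)).symm

lemma eq_C_of_isHomogeneous_zero {f : MvPolynomial (Fin n) ℂ}
    (hf : f.IsHomogeneous 0) : f = MvPolynomial.C (MvPolynomial.constantCoeff f) := by
  ext m
  rw [MvPolynomial.coeff_C]
  split_ifs with h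
  · subst h; rfl
  · exact hf.coeff_eq_zero (by
      intro hc
      exact (Ne.symm h) ((Finsupp.degree_eq_zero_iff m).mp hc))

lemma constantCoeff_eq_zero_of_isHomogeneous {f : MvPolynomial (Fin n) ℂ} {N : ℕ}
    (hf : f.IsHomogeneous N) (hN : N ≠ 0) : MvPolynomial.constantCoeff f = 0 := by
  rw [show (MvPolynomial.constantCoeff f) = f.coeff 0 from rfl]
  exact hf.coeff_eq_zero (by simpa using Ne.symm hN)

lemma eq_zero_of_pderiv_eq_zero {f : MvPolynomial (Fin n) ℂ} {N : ℕ}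
    (hf : f.IsHomogeneous N) (hN : N ≠ 0) (h : ∀ i, pderiv i f = 0) : f = 0 := by
  have := euler f hf
  rw [Finset.sum_congr rfl (fun i _ => by rw [h i, mul_zero])] at this
  rw [Finset.sum_const_zero] at this
  have hC : (MvPolynomial.C (N : ℂ) : MvPolynomial (Fin n) ℂ) ≠ 0 := by
    simp [MvPolynomial.C_eq_zero, Nat.cast_eq_zero, hN]
  rcases mul_eq_zero.mp this.symm with h' | h'
  · exact absurd h' hC
  · exact h'

end CubicAux

/-- A cubic surface with an ordinary triple point at `P` is, after a linear
change of coordinates moving `(0:0:0:1)` to `P`, the cone over a smooth plane cubic curve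
with vertex `P` (the equation involves only `x₀, x₁, x₂` and is a nonsingular ternary
cubic form), and `P` is the unique singular point of the surface.  In particular
`μ₃(3) = 1`. -/
theorem cubic_triple_point
    (f : MvPolynomial (Fin 4) ℂ) (hf : f ≠ 0) (hhom : f.IsHomogeneous 3)
    (p : Fin 4 → ℂ) (hp : p ≠ 0) (htp : OrdinaryTriplePointAt 3 f p) :
    (∃ B : Matrix (Fin 4) (Fin 4) ℂ, IsUnit B.det ∧ B.mulVec ![0, 0, 0, 1] = p ∧
      ∃ c : MvPolynomial (Fin 3) ℂ, c.IsHomogeneous 3 ∧ NowhereSingular c ∧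
        substMatrix B f = MvPolynomial.rename Fin.castSucc c) ∧
    (∀ q : Fin 4 → ℂ, q ≠ 0 → SingularAt f q → ∃ c : ℂ, q = c • p) := by
  classical
  obtain ⟨h3, -, B, hBu, hBp, g, hg, hFsum, hns⟩ := htp
  set E : Fin 4 → ℂ := ![0, 0, 0, 1] with hEdef
  have hE0 : E ∘ Fin.castSucc = (0 : Fin 3 → ℂ) := by
    funext i; fin_cases i <;> rfl
  have hE3 : E 3 = 1 := rfl
  have hMult : ∀ l : List (Fin 4), l.length < 3 →
      MvPolynomial.eval E (pderivList l (substMatrix B f)) = 0 := fun l hl =>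
    CubicAux.multAtLeast_subst B p E hBp l f (fun l' hl' => h3 l' (hl' ▸ hl))
  have hevalt : ∀ (m : ℕ) (h : MvPolynomial (Fin 3) ℂ),
      MvPolynomial.eval E (MvPolynomial.X 3 ^ m * MvPolynomial.rename Fin.castSucc h) =
        MvPolynomial.constantCoeff h := by
    intro m h
    rw [map_mul, map_pow, eval_X, hE3, one_pow, one_mul, eval_rename, hE0]
    exact DFunLike.congr_fun MvPolynomial.eval_zero h
  have hpd : ∀ (h : ℕ → MvPolynomial (Fin 3) ℂ) (i : Fin 3),
      pderiv i.castSucc (∑ j ∈ Finset.range 4,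
          MvPolynomial.X 3 ^ (3 - j) * MvPolynomial.rename Fin.castSucc (h j)) =
      ∑ j ∈ Finset.range 4,
          MvPolynomial.X 3 ^ (3 - j) * MvPolynomial.rename Fin.castSucc (pderiv i (h j)) := by
    intro h i
    have hne : (3 : Fin 4) ≠ i.castSucc := by
      have hi := i.isLt
      intro hc
      have h2 : ((3 : Fin 4) : ℕ) = (i.castSucc : ℕ) := congrArg Fin.val hc
      rw [Fin.coe_castSucc] at h2
      have h3' : ((3 : Fin 4) : ℕ) = 3 := rfl
      omega
    rw [map_sum]
    refine Finset.sum_congr rfl fun j _ => ?_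
    rw [pderiv_mul, pderiv_pow, pderiv_X_of_ne hne, pderiv_rename (Fin.castSucc_injective 3)]
    ring
  have hcc : ∀ (h : MvPolynomial (Fin 3) ℂ) (N : ℕ), h.IsHomogeneous N → N ≠ 0 →
      MvPolynomial.constantCoeff h = 0 := fun h N hh hN =>
    CubicAux.constantCoeff_eq_zero_of_isHomogeneous hh hN
  -- g 0 = 0
  have hg0 : g 0 = 0 := by
    have h0 := hMult [] (by norm_num)
    rw [CubicAux.pderivList_nil, hFsum, map_sum, Finset.sum_range_succ, Finset.sum_range_succ,
      Finset.sum_range_succ, Finset.sum_range_succ, Finset.range_zero, Finset.sum_empty,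
      hevalt, hevalt, hevalt, hevalt, hcc _ 1 (hg 1) one_ne_zero,
      hcc _ 2 (hg 2) two_ne_zero, hcc _ 3 (hg 3) (by norm_num)] at h0
    rw [CubicAux.eq_C_of_isHomogeneous_zero (hg 0)]
    have : MvPolynomial.constantCoeff (g 0) = 0 := by simpa using h0
    rw [this, map_zero]
  -- g 1 = 0
  have hg1 : g 1 = 0 := by
    apply CubicAux.eq_zero_of_pderiv_eq_zero (hg 1) one_ne_zero
    intro i
    have h1 := hMult [i.castSucc] (by norm_num)
    have hply : pderivList [i.castSucc] (substMatrix B f) =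
        pderiv i.castSucc (substMatrix B f) := rfl
    rw [hply, hFsum, hpd g i, map_sum, Finset.sum_range_succ, Finset.sum_range_succ,
      Finset.sum_range_succ, Finset.sum_range_succ, Finset.range_zero, Finset.sum_empty,
      hevalt, hevalt, hevalt, hevalt, hg0, map_zero, map_zero,
      hcc _ 1 (CubicAux.isHomogeneous_pderiv (hg 2) i) one_ne_zero,
      hcc _ 2 (CubicAux.isHomogeneous_pderiv (hg 3) i) two_ne_zero] at h1
    rw [CubicAux.eq_C_of_isHomogeneous_zero (CubicAux.isHomogeneous_pderiv (hg 1) i)]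
    have : MvPolynomial.constantCoeff (pderiv i (g 1)) = 0 := by simpa using h1
    rw [this, map_zero]
  -- g 2 = 0
  have hg2 : g 2 = 0 := by
    apply CubicAux.eq_zero_of_pderiv_eq_zero (hg 2) two_ne_zero
    intro i
    apply CubicAux.eq_zero_of_pderiv_eq_zero (CubicAux.isHomogeneous_pderiv (hg 2) i)
      one_ne_zero
    intro k
    have h1 := hMult [i.castSucc, k.castSucc] (by norm_num)
    have hply : pderivList [i.castSucc, k.castSucc] (substMatrix B f) =
        pderiv k.castSucc (pderiv i.castSucc (substMatrix B f)) := rfl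
    rw [hply, hFsum, hpd g i] at h1
    rw [hpd (fun j => pderiv i (g j)) k] at h1
    rw [map_sum, Finset.sum_range_succ, Finset.sum_range_succ,
      Finset.sum_range_succ, Finset.sum_range_succ, Finset.range_zero, Finset.sum_empty,
      hevalt, hevalt, hevalt, hevalt, hg0, hg1] at h1
    simp only [map_zero, zero_add] at h1
    rw [hcc _ 1 (CubicAux.isHomogeneous_pderiv (CubicAux.isHomogeneous_pderiv (hg 3) i) k)
        one_ne_zero, add_zero] at h1
    rw [CubicAux.eq_C_of_isHomogeneous_zero
      (CubicAux.isHomogeneous_pderiv (CubicAux.isHomogeneous_pderiv (hg 2) i) k)]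
    have : MvPolynomial.constantCoeff (pderiv k (pderiv i (g 2))) = 0 := by simpa using h1
    rw [this, map_zero]
  have hFc : substMatrix B f = MvPolynomial.rename Fin.castSucc (g 3) := by
    rw [hFsum, Finset.sum_range_succ, Finset.sum_range_succ, Finset.sum_range_succ,
      Finset.sum_range_succ, Finset.range_zero, Finset.sum_empty, hg0, hg1, hg2]
    simp
  refine ⟨⟨B, hBu, hBp, g 3, hg 3, hns, hFc⟩, ?_⟩
  intro q hq hsing
  set r : Fin 4 → ℂ := B⁻¹.mulVec q with hrdef
  have hr : B.mulVec r = q := by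
    rw [hrdef, Matrix.mulVec_mulVec, Matrix.mul_nonsing_inv _ hBu, Matrix.one_mulVec]
  have hz : ∀ k : Fin 3, MvPolynomial.eval (r ∘ Fin.castSucc) (pderiv k (g 3)) = 0 := by
    intro k
    have h1 := CubicAux.multAtLeast_subst B q r hr [k.castSucc] f
      (fun l' hl' => hsing l' (by simp [hl']))
    have hply : pderivList [k.castSucc] (substMatrix B f) =
        pderiv k.castSucc (substMatrix B f) := rfl
    rw [hply, hFc, pderiv_rename (Fin.castSucc_injective 3), eval_rename] at h1
    exact h1
  have hr0 : r ∘ Fin.castSucc = 0 := by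
    by_contra hne
    obtain ⟨k, hk⟩ := hns (r ∘ Fin.castSucc) hne
    exact hk (hz k)
  have hc : ∀ k : Fin 3, r k.castSucc = 0 := fun k => congrFun hr0 k
  refine ⟨r 3, ?_⟩
  have hrr : r = r 3 • E := by
    funext i
    fin_cases i
    · simpa [hEdef] using hc 0
    · simpa [hEdef] using hc 1
    · simpa [hEdef] using hc 2
    · simp [hEdef]
  calc q = B.mulVec r := hr.symm
    _ = B.mulVec (r 3 • E) := by rw [← hrr]
    _ = r 3 • B.mulVec E := by rw [Matrix.mulVec_smul]
    _ = r 3 • p := by rw [hEdef, hBp]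
end
end

section
/- Let A ∈ GL₄(ℂ) and let φ : ℙ¹(ℂ) → ℙ³(ℂ) be the twisted cubic given by φ(s : t) = A · (s³, s²t, st², t³). Let X = {f = 0} ⊂ ℙ³(ℂ) be a surface of degree 6 whose only singularities are ordinary triple points. Then the image of φ contains at most six triple points of X. -/
open MvPolynomial

noncomputable section

namespace Aux

@[simp] lemma pderivList_nil {n : ℕ} (f : MvPolynomial (Fin n) ℂ) :
    pderivList [] f = f := rfl

@[simp] lemma pderivList_cons {n : ℕ} (i : Fin n) (l : List (Fin n))
    (f : MvPolynomial (Fin n) ℂ) :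
    pderivList (i :: l) f = pderivList l (MvPolynomial.pderiv i f) := rfl

lemma pderivList_add {n : ℕ} (l : List (Fin n)) (f g : MvPolynomial (Fin n) ℂ) :
    pderivList l (f + g) = pderivList l f + pderivList l g := by
  induction l generalizing f g with
  | nil => rfl
  | cons i l ih => simp [ih, map_add]

lemma pderivList_C_mul {n : ℕ} (l : List (Fin n)) (c : ℂ) (f : MvPolynomial (Fin n) ℂ) :
    pderivList l (MvPolynomial.C c * f) = MvPolynomial.C c * pderivList l f := by
  induction l generalizing f with
  | nil => rfl
  | cons i l ih => simp [MvPolynomial.pderiv_C_mul, ih]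

lemma pderivList_sum {n : ℕ} {ι : Type*} (l : List (Fin n)) (s : Finset ι)
    (F : ι → MvPolynomial (Fin n) ℂ) :
    pderivList l (∑ i ∈ s, F i) = ∑ i ∈ s, pderivList l (F i) := by
  induction l generalizing F with
  | nil => rfl
  | cons i l ih => simp [map_sum, ih]

lemma multAtLeast_add {n m : ℕ} {f g : MvPolynomial (Fin n) ℂ} {p : Fin n → ℂ}
    (hf : MultAtLeast f p m) (hg : MultAtLeast g p m) : MultAtLeast (f + g) p m := by
  intro l hl
  rw [pderivList_add, map_add, hf l hl, hg l hl, add_zero]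

lemma multAtLeast_C_mul {n m : ℕ} {f : MvPolynomial (Fin n) ℂ} {p : Fin n → ℂ} (c : ℂ)
    (hf : MultAtLeast f p m) : MultAtLeast (MvPolynomial.C c * f) p m := by
  intro l hl
  rw [pderivList_C_mul, map_mul, hf l hl, mul_zero]

lemma multAtLeast_sum {n m : ℕ} {ι : Type*} (s : Finset ι) (F : ι → MvPolynomial (Fin n) ℂ)
    {p : Fin n → ℂ} (h : ∀ i ∈ s, MultAtLeast (F i) p m) : MultAtLeast (∑ i ∈ s, F i) p m := by
  intro l hl
  rw [pderivList_sum, map_sum]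
  exact Finset.sum_eq_zero fun i hi => h i hi l hl

/-- aeval at a ℂ-point is eval. -/
lemma aeval_eq_eval {n : ℕ} (q : Fin n → ℂ) (p : MvPolynomial (Fin n) ℂ) :
    MvPolynomial.aeval q p = MvPolynomial.eval q p := by
  rw [MvPolynomial.aeval_def, Algebra.algebraMap_self, MvPolynomial.eval₂_id]

lemma eval_aeval {n m : ℕ} (q : Fin m → ℂ) (σ : Fin n → MvPolynomial (Fin m) ℂ)
    (p : MvPolynomial (Fin n) ℂ) :
    MvPolynomial.eval q (MvPolynomial.aeval σ p)
      = MvPolynomial.eval (fun j => MvPolynomial.eval q (σ j)) p := by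
  rw [← aeval_eq_eval q, MvPolynomial.comp_aeval_apply]
  simp only [aeval_eq_eval]

/-- Chain rule. -/
lemma pderiv_aeval {n m : ℕ} (σ : Fin n → MvPolynomial (Fin m) ℂ)
    (f : MvPolynomial (Fin n) ℂ) (i : Fin m) :
    MvPolynomial.pderiv i (MvPolynomial.aeval σ f)
      = ∑ j, MvPolynomial.aeval σ (MvPolynomial.pderiv j f) * MvPolynomial.pderiv i (σ j) := by
  induction f using MvPolynomial.induction_on with
  | C a => simp [MvPolynomial.algebraMap_eq]
  | add p q hp hq =>
      simp only [map_add, hp, hq, add_mul, Finset.sum_add_distrib]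
  | mul_X p j hp =>
      simp only [map_mul, MvPolynomial.aeval_X, MvPolynomial.pderiv_mul, hp]
      rw [Finset.sum_mul]
      have key : ∀ r : Fin n,
          MvPolynomial.aeval σ (MvPolynomial.pderiv r p * MvPolynomial.X j
              + p * MvPolynomial.pderiv r (MvPolynomial.X j))
            * MvPolynomial.pderiv i (σ r)
          = (MvPolynomial.aeval σ (MvPolynomial.pderiv r p) * MvPolynomial.pderiv i (σ r)) * σ j
            + (if r = j then MvPolynomial.aeval σ p * MvPolynomial.pderiv i (σ j) else 0) := by
        intro r
        by_cases h : r = j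
        · subst h
          rw [if_pos rfl, MvPolynomial.pderiv_X_self]
          simp only [mul_one, map_add, map_mul, MvPolynomial.aeval_X]
          ring
        · rw [MvPolynomial.pderiv_X_of_ne (fun hh => h hh.symm), if_neg h]
          simp only [mul_zero, add_zero, map_mul, MvPolynomial.aeval_X]
          ring
      rw [Finset.sum_congr rfl fun r _ => key r, Finset.sum_add_distrib,
        Finset.sum_ite_eq' Finset.univ j]
      simp

end Aux

namespace Aux

lemma pderivList_aeval_mem {n m : ℕ} (σ : Fin n → MvPolynomial (Fin m) ℂ)
    (f : MvPolynomial (Fin n) ℂ) (u : MvPolynomial (Fin m) ℂ) (l : List (Fin m)) :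
    pderivList l (MvPolynomial.aeval σ f * u) ∈
      Ideal.span {g | ∃ l' : List (Fin n), l'.length ≤ l.length ∧
        g = MvPolynomial.aeval σ (pderivList l' f)} := by
  induction l generalizing f u with
  | nil =>
      exact Ideal.mul_mem_right u _ (Ideal.subset_span ⟨[], le_refl 0, rfl⟩)
  | cons i l ih =>
      rw [pderivList_cons, MvPolynomial.pderiv_mul, pderiv_aeval, Finset.sum_mul,
        pderivList_add, pderivList_sum]
      apply Ideal.add_mem
      · apply Ideal.sum_mem
        intro j _
        have h1 : MvPolynomial.aeval σ (MvPolynomial.pderiv j f) * MvPolynomial.pderiv i (σ j) * u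
            = MvPolynomial.aeval σ (MvPolynomial.pderiv j f)
              * (MvPolynomial.pderiv i (σ j) * u) := by ring
        rw [h1]
        refine Ideal.span_mono ?_ (ih (MvPolynomial.pderiv j f) (MvPolynomial.pderiv i (σ j) * u))
        rintro g ⟨l', hl', rfl⟩
        exact ⟨j :: l', by simpa using Nat.succ_le_succ hl', rfl⟩
      · refine Ideal.span_mono ?_ (ih f (MvPolynomial.pderiv i u))
        rintro g ⟨l', hl', rfl⟩
        exact ⟨l', hl'.trans (Nat.le_succ _), rfl⟩

lemma multAtLeast_aeval {n m r : ℕ} (σ : Fin n → MvPolynomial (Fin m) ℂ)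
    (f : MvPolynomial (Fin n) ℂ) (q : Fin m → ℂ)
    (h : MultAtLeast f (fun j => MvPolynomial.eval q (σ j)) r) :
    MultAtLeast (MvPolynomial.aeval σ f) q r := by
  intro l hl
  have hm := pderivList_aeval_mem σ f 1 l
  rw [mul_one] at hm
  have hker : Ideal.span {g | ∃ l' : List (Fin n), l'.length ≤ l.length ∧
        g = MvPolynomial.aeval σ (pderivList l' f)}
      ≤ RingHom.ker (MvPolynomial.eval q) := by
    rw [Ideal.span_le]
    rintro g ⟨l', hl', rfl⟩
    have : MvPolynomial.eval q (MvPolynomial.aeval σ (pderivList l' f)) = 0 := by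
      rw [eval_aeval]
      exact h l' (lt_of_le_of_lt hl' hl)
    simpa [RingHom.mem_ker] using this
  exact hker hm

end Aux

namespace Aux

lemma degree_add' {n : ℕ} (a b : Fin n →₀ ℕ) :
    Finsupp.degree (a + b) = Finsupp.degree a + Finsupp.degree b := by
  simp [Finsupp.degree_eq_weight_one, map_add]

lemma degree_single' {n : ℕ} (i : Fin n) (k : ℕ) :
    Finsupp.degree (Finsupp.single i k) = k := by
  classical
  rcases Nat.eq_zero_or_pos k with hk | hk
  · subst hk; simp
  · have hk0 : k ≠ 0 := by omega
    exact Finsupp.degree_single i k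

lemma isHom_pderiv {n d : ℕ} {f : MvPolynomial (Fin n) ℂ} (h : f.IsHomogeneous d) (i : Fin n) :
    (MvPolynomial.pderiv i f).IsHomogeneous (d - 1) := by
  have hf : MvPolynomial.pderiv i f
      = ∑ v ∈ f.support, MvPolynomial.pderiv i (MvPolynomial.monomial v (MvPolynomial.coeff v f)) := by
    rw [← map_sum, ← MvPolynomial.as_sum]
  rw [hf]
  apply MvPolynomial.IsHomogeneous.sum
  intro v hv
  rw [MvPolynomial.pderiv_monomial]
  by_cases h0 : v i = 0
  · simp only [h0, Nat.cast_zero, mul_zero, MvPolynomial.monomial_zero]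
    exact MvPolynomial.isHomogeneous_zero _ _ _
  · apply MvPolynomial.isHomogeneous_monomial
    have hvd : Finsupp.degree v = d := by
      rw [Finsupp.degree_eq_weight_one]
      exact h (MvPolynomial.mem_support_iff.mp hv)
    have hsplit : v = (v - Finsupp.single i 1) + Finsupp.single i 1 := by
      ext j
      by_cases hj : j = i
      · subst hj
        simp only [Finsupp.add_apply, Finsupp.tsub_apply, Finsupp.single_eq_same]
        omega
      · simp [Finsupp.single_eq_of_ne' (Ne.symm hj)]
    have := congrArg Finsupp.degree hsplit
    rw [degree_add', degree_single'] at this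
    omega

lemma eval_smul_of_isHom {n d : ℕ} {f : MvPolynomial (Fin n) ℂ} (h : f.IsHomogeneous d)
    (c : ℂ) (x : Fin n → ℂ) :
    MvPolynomial.eval (fun i => c * x i) f = c ^ d * MvPolynomial.eval x f := by
  rw [MvPolynomial.eval_eq, MvPolynomial.eval_eq, Finset.mul_sum]
  apply Finset.sum_congr rfl
  intro v hv
  have hdeg : ∑ i ∈ v.support, v i = d := by
    have := h (MvPolynomial.mem_support_iff.mp hv)
    rw [show (1 : Fin n → ℕ) = fun _ => 1 from rfl, ← Finsupp.degree_eq_weight_one] at this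
    exact this
  have : ∏ i ∈ v.support, (c * x i) ^ v i
      = (∏ i ∈ v.support, c ^ v i) * ∏ i ∈ v.support, x i ^ v i := by
    rw [← Finset.prod_mul_distrib]
    exact Finset.prod_congr rfl fun i _ => mul_pow _ _ _
  rw [this, Finset.prod_pow_eq_pow_sum, hdeg]
  ring

lemma isHom_of_X_pow_mul {i : Fin 2} {q : MvPolynomial (Fin 2) ℂ} {m : ℕ}
    (h : (MvPolynomial.X i ^ 2 * q).IsHomogeneous (m + 2)) : q.IsHomogeneous m := by
  intro d hd
  have hc : MvPolynomial.coeff (Finsupp.single i 2 + d) (MvPolynomial.X i ^ 2 * q)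
      = MvPolynomial.coeff d q := by
    have h2 : (MvPolynomial.X i : MvPolynomial (Fin 2) ℂ) ^ 2 * q
        = MvPolynomial.X i * (MvPolynomial.X i * q) := by ring
    have hs : Finsupp.single i 2 + d = Finsupp.single i 1 + (Finsupp.single i 1 + d) := by
      rw [← add_assoc, ← Finsupp.single_add]
    rw [h2, hs, MvPolynomial.coeff_X_mul, MvPolynomial.coeff_X_mul]
  have := h (by rw [hc]; exact hd)
  rw [show (1 : Fin 2 → ℕ) = fun _ => 1 from rfl, ← Finsupp.degree_eq_weight_one, degree_add',
    degree_single'] at this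
  rw [show (1 : Fin 2 → ℕ) = fun _ => 1 from rfl, ← Finsupp.degree_eq_weight_one]
  omega

lemma prime_X0 : Prime (MvPolynomial.X 0 : MvPolynomial (Fin 2) ℂ) := by
  rw [← MulEquiv.prime_iff (MvPolynomial.finSuccEquiv ℂ 1).toMulEquiv]
  have : (MvPolynomial.finSuccEquiv ℂ 1) (MvPolynomial.X 0) = Polynomial.X :=
    MvPolynomial.finSuccEquiv_X_zero
  rw [show ((MvPolynomial.finSuccEquiv ℂ 1).toMulEquiv : MvPolynomial (Fin 2) ℂ ≃* _)
        (MvPolynomial.X 0) = Polynomial.X from this]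
  exact Polynomial.prime_X

lemma prime_X2 (i : Fin 2) : Prime (MvPolynomial.X i : MvPolynomial (Fin 2) ℂ) := by
  rw [← MulEquiv.prime_iff (MvPolynomial.renameEquiv ℂ (Equiv.swap i 0)).toMulEquiv]
  have : ((MvPolynomial.renameEquiv ℂ (Equiv.swap i 0)).toMulEquiv :
        MvPolynomial (Fin 2) ℂ ≃* MvPolynomial (Fin 2) ℂ) (MvPolynomial.X i)
      = MvPolynomial.X 0 := by
    show (MvPolynomial.renameEquiv ℂ (Equiv.swap i 0)) (MvPolynomial.X i) = _
    rw [MvPolynomial.renameEquiv_apply, MvPolynomial.rename_X, Equiv.swap_apply_left]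
  rw [this]
  exact prime_X0

lemma eval10_of_X1_dvd {p : MvPolynomial (Fin 2) ℂ}
    (h : (MvPolynomial.X 1 : MvPolynomial (Fin 2) ℂ) ∣ p) :
    MvPolynomial.eval ![(1 : ℂ), 0] p = 0 := by
  obtain ⟨c, rfl⟩ := h
  simp

end Aux

namespace Aux

def toP : MvPolynomial (Fin 2) ℂ →ₐ[ℂ] Polynomial ℂ :=
  MvPolynomial.aeval ![Polynomial.X, 1]

lemma toP_derivative (p : MvPolynomial (Fin 2) ℂ) :
    Polynomial.derivative (toP p) = toP (MvPolynomial.pderiv 0 p) := by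
  induction p using MvPolynomial.induction_on with
  | C a => simp [toP]
  | add p q hp hq => simp [map_add, hp, hq]
  | mul_X p j hp =>
      have hd : Polynomial.derivative (toP (MvPolynomial.X j))
          = toP (MvPolynomial.pderiv 0 (MvPolynomial.X j)) := by
        fin_cases j
        · simp [toP]
        · rw [MvPolynomial.pderiv_X_of_ne (show (⟨1, by omega⟩ : Fin 2) ≠ 0 by decide)]
          simp [toP]
      rw [map_mul, Polynomial.derivative_mul, hp, hd, MvPolynomial.pderiv_mul, map_add,
        map_mul, map_mul]

lemma toP_eval (z : ℂ) (p : MvPolynomial (Fin 2) ℂ) :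
    Polynomial.eval z (toP p) = MvPolynomial.eval ![z, 1] p := by
  induction p using MvPolynomial.induction_on with
  | C a => simp [toP]
  | add p q hp hq => simp [map_add, hp, hq]
  | mul_X p j hp =>
      have hX : Polynomial.eval z (toP (MvPolynomial.X j))
          = MvPolynomial.eval ![z, 1] (MvPolynomial.X j) := by
        fin_cases j <;> simp [toP]
      rw [map_mul, Polynomial.eval_mul, hp, map_mul, hX]

lemma toP_iterate (m : ℕ) (p : MvPolynomial (Fin 2) ℂ) :
    Polynomial.derivative^[m] (toP p) = toP ((MvPolynomial.pderiv (0 : Fin 2))^[m] p) := by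
  induction m generalizing p with
  | zero => rfl
  | succ m ih =>
      rw [Function.iterate_succ_apply, Function.iterate_succ_apply, toP_derivative, ih]

lemma iterate_pderiv_eq_pderivList (m : ℕ) (p : MvPolynomial (Fin 2) ℂ) :
    (MvPolynomial.pderiv (0 : Fin 2))^[m] p = pderivList (List.replicate m 0) p := by
  induction m generalizing p with
  | zero => rfl
  | succ m ih =>
      rw [Function.iterate_succ_apply, List.replicate_succ, pderivList_cons, ih]

lemma iterate_pderiv_isHom {d m : ℕ} {p : MvPolynomial (Fin 2) ℂ} (h : p.IsHomogeneous d) :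
    ((MvPolynomial.pderiv (0 : Fin 2))^[m] p).IsHomogeneous (d - m) := by
  induction m generalizing d p with
  | zero => simpa using h
  | succ m ih =>
      rw [Function.iterate_succ_apply]
      have := ih (isHom_pderiv h 0)
      rwa [show d - 1 - m = d - (m + 1) by omega] at this

lemma natDegree_toP_le {p : MvPolynomial (Fin 2) ℂ} {d : ℕ} (h : p.IsHomogeneous d) :
    (toP p).natDegree ≤ d := by
  conv_lhs => rw [MvPolynomial.as_sum p]
  rw [map_sum]
  apply Polynomial.natDegree_sum_le_of_forall_le
  intro v hv
  rw [show toP (MvPolynomial.monomial v (MvPolynomial.coeff v p))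
      = Polynomial.C (MvPolynomial.coeff v p) * (Polynomial.X ^ v 0 * 1 ^ v 1) by
    simp [toP, MvPolynomial.aeval_monomial, Finsupp.prod_fintype, Fin.prod_univ_two,
      Polynomial.algebraMap_eq]]
  refine le_trans (Polynomial.natDegree_C_mul_le _ _) ?_
  rw [one_pow, mul_one, Polynomial.natDegree_X_pow]
  calc v 0 ≤ Finsupp.degree v := Finsupp.le_degree 0 v
    _ = d := by rw [Finsupp.degree_eq_weight_one]; exact h (MvPolynomial.mem_support_iff.mp hv)

/-- Core counting lemma: a nonzero binary form of degree `d` vanishing to order `≥ r`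
at `k` pairwise non-proportional points satisfies `k * r ≤ d`. -/
lemma count_bound {d r k : ℕ} (h : MvPolynomial (Fin 2) ℂ) (hne : h ≠ 0)
    (hhom : h.IsHomogeneous d) (s t : Fin k → ℂ)
    (hst : ∀ i, ¬(s i = 0 ∧ t i = 0))
    (hdist : ∀ i j, i ≠ j → s i * t j ≠ s j * t i)
    (hmult : ∀ i, MultAtLeast h ![s i, t i] r) :
    k * r ≤ d := by
  rcases Nat.eq_zero_or_pos r with hr | hr
  · simp [hr]
  -- choose a shear constant c
  obtain ⟨c, hcT⟩ := Infinite.exists_notMem_finset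
    (Finset.image (fun i => t i / s i) Finset.univ)
  have hu : ∀ i, t i - c * s i ≠ 0 := by
    intro i
    by_cases hs : s i = 0
    · rw [hs, mul_zero, sub_zero]
      exact fun ht => hst i ⟨hs, ht⟩
    · intro hcontra
      apply hcT
      rw [Finset.mem_image]
      refine ⟨i, Finset.mem_univ i, ?_⟩
      rw [div_eq_iff hs]
      linear_combination hcontra
  set σ : Fin 2 → MvPolynomial (Fin 2) ℂ :=
    ![MvPolynomial.X 0, MvPolynomial.C c * MvPolynomial.X 0 + MvPolynomial.X 1] with hσ
  set h' : MvPolynomial (Fin 2) ℂ := MvPolynomial.aeval σ h with hh'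
  have hσhom : ∀ i, (σ i).IsHomogeneous 1 := by
    intro i
    fin_cases i
    · exact MvPolynomial.isHomogeneous_X ℂ 0
    · exact ((MvPolynomial.isHomogeneous_X ℂ 0).C_mul c).add (MvPolynomial.isHomogeneous_X ℂ 1)
  have hom' : h'.IsHomogeneous d := by
    have := MvPolynomial.IsHomogeneous.aeval hhom σ hσhom
    rwa [one_mul] at this
  have h'ne : h' ≠ 0 := by
    intro h0
    apply hne
    set τ : Fin 2 → MvPolynomial (Fin 2) ℂ :=
      ![MvPolynomial.X 0, MvPolynomial.C (-c) * MvPolynomial.X 0 + MvPolynomial.X 1] with hτ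
    have hcomp : MvPolynomial.aeval τ h' = h := by
      rw [hh', MvPolynomial.comp_aeval_apply]
      have : (fun i => MvPolynomial.aeval τ (σ i)) = MvPolynomial.X := by
        funext i
        fin_cases i
        · simp [hσ, hτ]
        · simp [hσ, hτ, MvPolynomial.algebraMap_eq]
      rw [this, MvPolynomial.aeval_X_left_apply]
    rw [h0, map_zero] at hcomp
    exact hcomp.symm
  have mult' : ∀ i, MultAtLeast h' ![s i, t i - c * s i] r := by
    intro i
    apply multAtLeast_aeval
    have hpt : (fun j => MvPolynomial.eval ![s i, t i - c * s i] (σ j))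
        = (![s i, t i] : Fin 2 → ℂ) := by
      funext j
      fin_cases j
      · simp [hσ]
      · simp [hσ]
    rw [hpt]
    exact hmult i
  set u : Fin k → ℂ := fun i => t i - c * s i with hudef
  set z : Fin k → ℂ := fun i => s i / u i with hzdef
  set P : Polynomial ℂ := toP h' with hP
  have Pne : P ≠ 0 := by
    intro h0
    apply h'ne
    have hall : ∀ x : Fin 2 → ℂ, MvPolynomial.eval x (MvPolynomial.X 1 * h') = 0 := by
      intro x
      rw [map_mul, MvPolynomial.eval_X]
      by_cases hx1 : x 1 = 0
      · rw [hx1, zero_mul]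
      · have hxeq : (fun i => x 1 * (![x 0 / x 1, 1] : Fin 2 → ℂ) i) = x := by
          funext i
          fin_cases i
          · simp; field_simp
          · simp
        have := eval_smul_of_isHom hom' (x 1) ![x 0 / x 1, 1]
        rw [hxeq] at this
        rw [this, ← toP_eval, ← hP, h0, Polynomial.eval_zero, mul_zero, mul_zero]
    have : MvPolynomial.X 1 * h' = 0 := by
      apply MvPolynomial.funext
      intro x
      rw [hall x, map_zero]
    rcases mul_eq_zero.mp this with hX | hh
    · exact absurd hX (MvPolynomial.X_ne_zero 1)
    · exact hh
  have hPdeg : P.natDegree ≤ d := natDegree_toP_le hom'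
  -- root multiplicities
  have hroot : ∀ i, r ≤ P.rootMultiplicity (z i) := by
    intro i
    have : r - 1 < P.rootMultiplicity (z i) := by
      apply Polynomial.lt_rootMultiplicity_of_isRoot_iterate_derivative_of_mem_nonZeroDivisors Pne
      · intro m hm
        rw [Polynomial.IsRoot, hP, toP_iterate, toP_eval]
        have hq : ((MvPolynomial.pderiv (0 : Fin 2))^[m] h').IsHomogeneous (d - m) :=
          iterate_pderiv_isHom hom'
        have hzi : (fun j => (1 / u i) * (![s i, u i] : Fin 2 → ℂ) j)
            = (![z i, 1] : Fin 2 → ℂ) := by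
          funext j
          fin_cases j
          · simp [hzdef]
            ring
          · simp only [Matrix.cons_val_one, Matrix.head_cons]
            exact one_div_mul_cancel (hu i)
        have := eval_smul_of_isHom hq (1 / u i) ![s i, u i]
        rw [hzi] at this
        rw [this, iterate_pderiv_eq_pderivList]
        have hzero : MvPolynomial.eval ![s i, u i] (pderivList (List.replicate m 0) h') = 0 := by
          apply mult' i
          rw [List.length_replicate]
          omega
        rw [hzero, mul_zero]
      · apply mem_nonZeroDivisors_of_ne_zero
        exact_mod_cast Nat.cast_ne_zero.mpr (Nat.factorial_ne_zero (r - 1))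
    omega
  have zdist : ∀ i j, i ≠ j → z i ≠ z j := by
    intro i j hij heq
    have heq' : s i / u i = s j / u j := heq
    rw [div_eq_div_iff (hu i) (hu j)] at heq'
    have hexp : s i * (t j - c * s j) = s j * (t i - c * s i) := heq'
    apply hdist i j hij
    linear_combination hexp
  -- assemble the multiset of roots
  set m0 : Multiset ℂ := Multiset.bind Finset.univ.val (fun i => Multiset.replicate r (z i))
    with hm0
  have hcard : Multiset.card m0 = k * r := by
    rw [hm0, Multiset.card_bind]
    show (∑ i : Fin k, Multiset.card (Multiset.replicate r (z i))) = k * r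
    simp [Multiset.card_replicate, Finset.sum_const, mul_comm]
  have hle : m0 ≤ P.roots := by
    rw [Multiset.le_iff_count]
    intro a
    classical
    have hcnt : Multiset.count a m0 = ∑ i : Fin k, if z i = a then r else 0 := by
      rw [hm0, Multiset.count_bind]
      show (∑ i : Fin k, Multiset.count a (Multiset.replicate r (z i))) = _
      exact Finset.sum_congr rfl fun i _ => Multiset.count_replicate a (z i) r
    by_cases ha : ∃ i0, a = z i0
    · obtain ⟨i0, rfl⟩ := ha
      have : (∑ i : Fin k, if z i = z i0 then r else 0) = r := by
        rw [Finset.sum_eq_single i0]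
        · simp
        · intro j _ hj
          rw [if_neg]
          intro hzeq
          exact zdist j i0 hj hzeq
        · intro hii
          exact absurd (Finset.mem_univ i0) hii
      rw [hcnt, this, Polynomial.count_roots]
      exact hroot i0
    · push_neg at ha
      rw [hcnt, Finset.sum_eq_zero]
      · exact Nat.zero_le _
      · intro j _
        rw [if_neg (fun hh => ha j hh.symm)]
  calc k * r = Multiset.card m0 := hcard.symm
    _ ≤ Multiset.card P.roots := Multiset.card_le_card hle
    _ ≤ P.natDegree := Polynomial.card_roots' P
    _ ≤ d := hPdeg

end Aux

namespace Aux

open MvPolynomial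

lemma two_ne_zero' : (2 : MvPolynomial (Fin 2) ℂ) ≠ 0 := by
  intro h
  have : ((2:ℂ)) = 0 := by
    have h2 : (MvPolynomial.C (2:ℂ) : MvPolynomial (Fin 2) ℂ) = 0 := by
      rw [show (MvPolynomial.C (2:ℂ) : MvPolynomial (Fin 2) ℂ) = 2 from map_ofNat _ 2, h]
    exact (MvPolynomial.C_eq_zero).mp h2
  norm_num at this

lemma hhalf : (2 : MvPolynomial (Fin 2) ℂ) * MvPolynomial.C (1/2 : ℂ) = 1 := by
  rw [show (2 : MvPolynomial (Fin 2) ℂ) = MvPolynomial.C 2 from (map_ofNat _ 2).symm,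
    ← MvPolynomial.C_mul]
  norm_num

lemma dvd_of_X1_dvd_mul {p q : MvPolynomial (Fin 2) ℂ}
    (hd : (MvPolynomial.X 1 : MvPolynomial (Fin 2) ℂ) ∣ p * q)
    (hp : MvPolynomial.eval ![(1:ℂ), 0] p ≠ 0) :
    (MvPolynomial.X 1 : MvPolynomial (Fin 2) ℂ) ∣ q :=
  ((prime_X2 1).2.2 p q hd).resolve_left (fun hh => hp (eval10_of_X1_dvd hh))

/-- Solving the syzygy equations for the twisted cubic. -/
lemma syzygy {G0 G1 G2 G3 : MvPolynomial (Fin 2) ℂ}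
    (R1 : 3 * MvPolynomial.X 0 ^ 2 * G0 + 2 * (MvPolynomial.X 0 * MvPolynomial.X 1) * G1
        + MvPolynomial.X 1 ^ 2 * G2 = 0)
    (R2 : MvPolynomial.X 0 ^ 2 * G1 + 2 * (MvPolynomial.X 0 * MvPolynomial.X 1) * G2
        + 3 * MvPolynomial.X 1 ^ 2 * G3 = 0) :
    ∃ α β : MvPolynomial (Fin 2) ℂ,
      G0 = MvPolynomial.X 1 ^ 2 * α ∧
      G1 = -(2 * (MvPolynomial.X 0 * MvPolynomial.X 1) * α) + MvPolynomial.X 1 ^ 2 * β ∧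
      G2 = MvPolynomial.X 0 ^ 2 * α - 2 * (MvPolynomial.X 0 * MvPolynomial.X 1) * β ∧
      G3 = MvPolynomial.X 0 ^ 2 * β := by
  have hXne : (MvPolynomial.X 1 : MvPolynomial (Fin 2) ℂ) ≠ 0 := MvPolynomial.X_ne_zero 1
  have hS : MvPolynomial.eval ![(1:ℂ), 0] (MvPolynomial.X 0 : MvPolynomial (Fin 2) ℂ) ≠ 0 := by
    simp
  -- X 1 ∣ G0
  obtain ⟨a, ha⟩ : (MvPolynomial.X 1 : MvPolynomial (Fin 2) ℂ) ∣ G0 := by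
    apply dvd_of_X1_dvd_mul (p := 3 * MvPolynomial.X 0 ^ 2)
    · exact ⟨-(2 * MvPolynomial.X 0 * G1 + MvPolynomial.X 1 * G2), by linear_combination R1⟩
    · simp
  -- reduced first relation
  have h2 : MvPolynomial.X 1 * (3 * MvPolynomial.X 0 ^ 2 * a + 2 * MvPolynomial.X 0 * G1
      + MvPolynomial.X 1 * G2) = 0 := by
    linear_combination R1 - (3 : MvPolynomial (Fin 2) ℂ) * MvPolynomial.X 0 ^ 2 * ha
  have h2' : 3 * MvPolynomial.X 0 ^ 2 * a + 2 * MvPolynomial.X 0 * G1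
      + MvPolynomial.X 1 * G2 = 0 := by
    rcases mul_eq_zero.mp h2 with h | h
    · exact absurd h hXne
    · exact h
  -- X 1 ∣ 3 X0 a + 2 G1
  obtain ⟨b, hb⟩ : (MvPolynomial.X 1 : MvPolynomial (Fin 2) ℂ)
      ∣ (3 * MvPolynomial.X 0 * a + 2 * G1) := by
    apply dvd_of_X1_dvd_mul (p := MvPolynomial.X 0)
    · exact ⟨-G2, by linear_combination h2'⟩
    · simp
  -- G2 = -(X0 * b)
  have hG2 : G2 = -(MvPolynomial.X 0 * b) := by
    have h3 : MvPolynomial.X 1 * (2 * (MvPolynomial.X 0 * b + G2)) = 0 := by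
      linear_combination 2 * h2' - 2 * MvPolynomial.X 0 * hb
    rcases mul_eq_zero.mp h3 with h | h
    · exact absurd h hXne
    · rcases mul_eq_zero.mp h with h' | h'
      · exact absurd h' two_ne_zero'
      · linear_combination h'
  -- 2 T² G3 = S²(S a + T b)
  have h4 : 2 * MvPolynomial.X 1 ^ 2 * G3
      = MvPolynomial.X 0 ^ 2 * (MvPolynomial.X 0 * a + MvPolynomial.X 1 * b) := by
    have h4' : (3 : MvPolynomial (Fin 2) ℂ) * (2 * MvPolynomial.X 1 ^ 2 * G3
        - MvPolynomial.X 0 ^ 2 * (MvPolynomial.X 0 * a + MvPolynomial.X 1 * b)) = 0 := by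
      linear_combination 2 * R2 - MvPolynomial.X 0 ^ 2 * hb
        - 4 * MvPolynomial.X 0 * MvPolynomial.X 1 * hG2
    have h3ne : (3 : MvPolynomial (Fin 2) ℂ) ≠ 0 := by
      intro h
      have := congrArg (MvPolynomial.eval ![(1:ℂ), 0]) h
      simp at this
    rcases mul_eq_zero.mp h4' with h | h
    · exact absurd h h3ne
    · linear_combination h
  -- X 1 ∣ a
  obtain ⟨α, hα⟩ : (MvPolynomial.X 1 : MvPolynomial (Fin 2) ℂ) ∣ a := by
    apply dvd_of_X1_dvd_mul (p := MvPolynomial.X 0 ^ 3)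
    · refine ⟨2 * MvPolynomial.X 1 * G3 - MvPolynomial.X 0 ^ 2 * b, ?_⟩
      linear_combination -h4
    · simp
  -- 2 T G3 = S²(S α + b)
  have h5 : 2 * MvPolynomial.X 1 * G3
      = MvPolynomial.X 0 ^ 2 * (MvPolynomial.X 0 * α + b) := by
    have h5' : MvPolynomial.X 1 * (2 * MvPolynomial.X 1 * G3
        - MvPolynomial.X 0 ^ 2 * (MvPolynomial.X 0 * α + b)) = 0 := by
      linear_combination h4 + MvPolynomial.X 0 ^ 3 * hα
    rcases mul_eq_zero.mp h5' with h | h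
    · exact absurd h hXne
    · linear_combination h
  -- X 1 ∣ S α + b
  obtain ⟨c, hc⟩ : (MvPolynomial.X 1 : MvPolynomial (Fin 2) ℂ)
      ∣ (MvPolynomial.X 0 * α + b) := by
    apply dvd_of_X1_dvd_mul (p := MvPolynomial.X 0 ^ 2)
    · exact ⟨2 * G3, by linear_combination -h5⟩
    · simp
  -- 2 G3 = S² c
  have h6 : 2 * G3 = MvPolynomial.X 0 ^ 2 * c := by
    have h6' : MvPolynomial.X 1 * (2 * G3 - MvPolynomial.X 0 ^ 2 * c) = 0 := by
      linear_combination h5 + MvPolynomial.X 0 ^ 2 * hc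
    rcases mul_eq_zero.mp h6' with h | h
    · exact absurd h hXne
    · linear_combination h
  refine ⟨α, MvPolynomial.C (1/2 : ℂ) * c, ?_, ?_, ?_, ?_⟩
  · linear_combination ha + MvPolynomial.X 1 * hα
  · -- 2 G1 = T² c - 4 S T α ; G1 = -(2 S T α) + T² (C(1/2) c)
    have h7 : 2 * G1 = MvPolynomial.X 1 ^ 2 * c - 4 * MvPolynomial.X 0 * MvPolynomial.X 1 * α := by
      linear_combination hb + MvPolynomial.X 1 * hc - 3 * MvPolynomial.X 0 * hα
    apply mul_left_cancel₀ two_ne_zero'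
    linear_combination h7 - MvPolynomial.X 1 ^ 2 * c * hhalf
  · -- G2 = S² α - 2 S T (C(1/2) c)
    apply mul_left_cancel₀ two_ne_zero'
    linear_combination 2 * hG2 - 2 * MvPolynomial.X 0 * hc
      + 2 * MvPolynomial.X 0 * MvPolynomial.X 1 * c * hhalf
  · apply mul_left_cancel₀ two_ne_zero'
    linear_combination h6 - MvPolynomial.X 0 ^ 2 * c * hhalf

end Aux

namespace Aux

lemma multAtLeast_two_of {q : MvPolynomial (Fin 2) ℂ} {p : Fin 2 → ℂ}
    (h0 : MvPolynomial.eval p q = 0)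
    (h1 : MvPolynomial.eval p (MvPolynomial.pderiv 0 q) = 0)
    (h2 : MvPolynomial.eval p (MvPolynomial.pderiv 1 q) = 0) :
    MultAtLeast q p 2 := by
  intro l hl
  match l with
  | [] => exact h0
  | [i] =>
      fin_cases i
      · exact h1
      · exact h2
  | (i :: j :: l') => simp at hl

lemma multAtLeast_eval {n m : ℕ} {q : MvPolynomial (Fin n) ℂ} {p : Fin n → ℂ}
    (h : MultAtLeast q p m) (hm : 0 < m) : MvPolynomial.eval p q = 0 :=
  h [] (by simpa using hm)

lemma multAtLeast_eval_pderiv {n m : ℕ} {q : MvPolynomial (Fin n) ℂ} {p : Fin n → ℂ}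
    (h : MultAtLeast q p m) (hm : 1 < m) (i : Fin n) :
    MvPolynomial.eval p (MvPolynomial.pderiv i q) = 0 :=
  h [i] (by simpa using hm)

/-- Extraction of order-two vanishing of the syzygy coefficients. -/
lemma syzygy_coeff_mult {α β G0 G1 G2 G3 : MvPolynomial (Fin 2) ℂ}
    (hG0 : G0 = MvPolynomial.X 1 ^ 2 * α)
    (hG1 : G1 = -(2 * (MvPolynomial.X 0 * MvPolynomial.X 1) * α) + MvPolynomial.X 1 ^ 2 * β)
    (hG2 : G2 = MvPolynomial.X 0 ^ 2 * α - 2 * (MvPolynomial.X 0 * MvPolynomial.X 1) * β)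
    (hG3 : G3 = MvPolynomial.X 0 ^ 2 * β)
    {a b : ℂ} (hab : ¬(a = 0 ∧ b = 0))
    (m0 : MultAtLeast G0 ![a, b] 2) (m1 : MultAtLeast G1 ![a, b] 2)
    (m2 : MultAtLeast G2 ![a, b] 2) (m3 : MultAtLeast G3 ![a, b] 2) :
    MultAtLeast α ![a, b] 2 ∧ MultAtLeast β ![a, b] 2 := by
  have d2 : ∀ i : Fin 2, MvPolynomial.pderiv i (2 : MvPolynomial (Fin 2) ℂ) = 0 := by
    intro i
    rw [show (2 : MvPolynomial (Fin 2) ℂ) = MvPolynomial.C 2 from (map_ofNat _ 2).symm]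
    exact MvPolynomial.pderiv_C
  have dS_S : MvPolynomial.pderiv (0 : Fin 2) (MvPolynomial.X 0 : MvPolynomial (Fin 2) ℂ) = 1 :=
    MvPolynomial.pderiv_X_self 0
  have dT_T : MvPolynomial.pderiv (1 : Fin 2) (MvPolynomial.X 1 : MvPolynomial (Fin 2) ℂ) = 1 :=
    MvPolynomial.pderiv_X_self 1
  have dS_T : MvPolynomial.pderiv (0 : Fin 2) (MvPolynomial.X 1 : MvPolynomial (Fin 2) ℂ) = 0 :=
    MvPolynomial.pderiv_X_of_ne (by decide)
  have dT_S : MvPolynomial.pderiv (1 : Fin 2) (MvPolynomial.X 0 : MvPolynomial (Fin 2) ℂ) = 0 :=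
    MvPolynomial.pderiv_X_of_ne (by decide)
  have e0 := multAtLeast_eval m0 (by norm_num)
  have e1 := multAtLeast_eval m1 (by norm_num)
  have e2 := multAtLeast_eval m2 (by norm_num)
  have e3 := multAtLeast_eval m3 (by norm_num)
  have d00 := multAtLeast_eval_pderiv m0 (by norm_num) 0
  have d01 := multAtLeast_eval_pderiv m0 (by norm_num) 1
  have d10 := multAtLeast_eval_pderiv m1 (by norm_num) 0
  have d11 := multAtLeast_eval_pderiv m1 (by norm_num) 1
  have d20 := multAtLeast_eval_pderiv m2 (by norm_num) 0
  have d21 := multAtLeast_eval_pderiv m2 (by norm_num) 1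
  have d30 := multAtLeast_eval_pderiv m3 (by norm_num) 0
  have d31 := multAtLeast_eval_pderiv m3 (by norm_num) 1
  rw [hG0] at e0 d00 d01
  rw [hG1] at e1 d10 d11
  rw [hG2] at e2 d20 d21
  rw [hG3] at e3 d30 d31
  simp only [map_add, map_mul, map_neg, map_sub, map_ofNat, MvPolynomial.pderiv_mul, map_pow,
    MvPolynomial.pderiv_pow, dS_S, dS_T, dT_S, dT_T, d2, map_zero, mul_zero, zero_mul, add_zero,
    zero_add, mul_one, map_one, one_mul, Nat.cast_ofNat, MvPolynomial.eval_X,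
    Matrix.cons_val_zero, Matrix.cons_val_one, Matrix.head_cons, pow_one]
    at e0 e1 e2 e3 d00 d01 d10 d11 d20 d21 d30 d31
  have cancel : ∀ {c X : ℂ}, c ≠ 0 → c ^ 2 * X = 0 → X = 0 := fun hc h =>
    (mul_eq_zero.mp h).resolve_left (pow_ne_zero 2 hc)
  by_cases hb : b = 0
  · -- then a ≠ 0
    have ha : a ≠ 0 := fun ha0 => hab ⟨ha0, hb⟩
    have hBev : MvPolynomial.eval ![a, b] β = 0 := cancel ha (by linear_combination e3)
    have hAev : MvPolynomial.eval ![a, b] α = 0 := cancel ha (by linear_combination e2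
      + 2 * a * b * hBev)
    have hB1 : MvPolynomial.eval ![a, b] (MvPolynomial.pderiv 1 β) = 0 :=
      cancel ha (by linear_combination d31)
    have hB0 : MvPolynomial.eval ![a, b] (MvPolynomial.pderiv 0 β) = 0 :=
      cancel ha (by linear_combination d30 - 2 * a * hBev)
    have hA1 : MvPolynomial.eval ![a, b] (MvPolynomial.pderiv 1 α) = 0 :=
      cancel ha (by linear_combination d21 + 2 * a * hBev + 2 * a * b * hB1)
    have hA0 : MvPolynomial.eval ![a, b] (MvPolynomial.pderiv 0 α) = 0 :=
      cancel ha (by linear_combination d20 - 2 * a * hAev + 2 * b * hBev + 2 * a * b * hB0)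
    exact ⟨multAtLeast_two_of hAev hA0 hA1, multAtLeast_two_of hBev hB0 hB1⟩
  · have hAev : MvPolynomial.eval ![a, b] α = 0 := cancel hb (by linear_combination e0)
    have hBev : MvPolynomial.eval ![a, b] β = 0 := cancel hb (by linear_combination e1
      + 2 * a * b * hAev)
    have hA0 : MvPolynomial.eval ![a, b] (MvPolynomial.pderiv 0 α) = 0 :=
      cancel hb (by linear_combination d00)
    have hA1 : MvPolynomial.eval ![a, b] (MvPolynomial.pderiv 1 α) = 0 :=
      cancel hb (by linear_combination d01 - 2 * b * hAev)
    have hB0 : MvPolynomial.eval ![a, b] (MvPolynomial.pderiv 0 β) = 0 :=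
      cancel hb (by linear_combination d10 + 2 * b * hAev + 2 * a * b * hA0)
    have hB1 : MvPolynomial.eval ![a, b] (MvPolynomial.pderiv 1 β) = 0 :=
      cancel hb (by linear_combination d11 + 2 * a * hAev + 2 * a * b * hA1 - 2 * b * hBev)
    exact ⟨multAtLeast_two_of hAev hA0 hA1, multAtLeast_two_of hBev hB0 hB1⟩

end Aux


open Aux

/-- A twisted cubic `φ(s:t) = A·(s³, s²t, st², t³)` (with `A ∈ GL₄(ℂ)`)
contains at most six triple points of a sextic surface whose only singularities are
ordinary triple points. -/
theorem twisted_cubic_at_most_six_triple_points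
    (f : MvPolynomial (Fin 4) ℂ) (hf : f ≠ 0) (hhom : f.IsHomogeneous 6)
    (hfin : (SingSet f).Finite)
    (htriple : ∀ P ∈ SingSet f, OrdinaryTriplePointAt 6 f P.rep)
    (A : Matrix (Fin 4) (Fin 4) ℂ) (hA : IsUnit A.det)
    (k : ℕ) (s t : Fin k → ℂ)
    (hst : ∀ i, (s i, t i) ≠ (0, 0))
    (hdist : ∀ i j : Fin k, i ≠ j → s i * t j ≠ s j * t i)
    (htp : ∀ i, OrdinaryTriplePointAt 6 f
      (A.mulVec ![s i ^ 3, s i ^ 2 * t i, s i * t i ^ 2, t i ^ 3])) :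
    k ≤ 6 := by
  classical
  set v : Fin 4 → MvPolynomial (Fin 2) ℂ :=
    ![MvPolynomial.X 0 ^ 3, MvPolynomial.X 0 ^ 2 * MvPolynomial.X 1,
      MvPolynomial.X 0 * MvPolynomial.X 1 ^ 2, MvPolynomial.X 1 ^ 3] with hv
  set ψ : Fin 4 → MvPolynomial (Fin 2) ℂ :=
    fun j => ∑ r, MvPolynomial.C (A j r) * v r with hψ
  have hvhom : ∀ r, (v r).IsHomogeneous 3 := by
    intro r
    fin_cases r
    · exact MvPolynomial.isHomogeneous_X_pow 0 3
    · exact (MvPolynomial.isHomogeneous_X_pow 0 2).mul (MvPolynomial.isHomogeneous_X ℂ 1)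
    · exact (MvPolynomial.isHomogeneous_X ℂ 0).mul (MvPolynomial.isHomogeneous_X_pow 1 2)
    · exact MvPolynomial.isHomogeneous_X_pow 1 3
  have hψhom : ∀ j, (ψ j).IsHomogeneous 3 := fun j =>
    MvPolynomial.IsHomogeneous.sum _ _ _ (fun r _ => ((hvhom r).C_mul _))
  have hψeval : ∀ a b : ℂ, (fun j => MvPolynomial.eval ![a, b] (ψ j))
      = A.mulVec ![a ^ 3, a ^ 2 * b, a * b ^ 2, b ^ 3] := by
    intro a b
    funext j
    simp only [hψ, map_sum, map_mul, MvPolynomial.eval_C, Matrix.mulVec, dotProduct]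
    apply Finset.sum_congr rfl
    intro r _
    congr 1
    fin_cases r <;> simp [hv]
  have hstn : ∀ i, ¬(s i = 0 ∧ t i = 0) := by
    intro i hcontra
    exact hst i (by rw [hcontra.1, hcontra.2])
  have hmult3 : ∀ i, MultAtLeast (MvPolynomial.aeval ψ f) ![s i, t i] 3 := by
    intro i
    apply multAtLeast_aeval
    rw [hψeval (s i) (t i)]
    exact (htp i).1
  have hEhom : (MvPolynomial.aeval ψ f).IsHomogeneous 18 := by
    have := hhom.aeval ψ hψhom
    norm_num at this
    exact this
  by_cases hE : MvPolynomial.aeval ψ f = 0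
  swap
  · have := count_bound (MvPolynomial.aeval ψ f) hE hEhom s t hstn hdist hmult3
    omega
  set H : Fin 4 → MvPolynomial (Fin 2) ℂ :=
    fun j => MvPolynomial.aeval ψ (MvPolynomial.pderiv j f) with hH
  have hHhom : ∀ j, (H j).IsHomogeneous 15 := by
    intro j
    have := (isHom_pderiv hhom j).aeval ψ hψhom
    norm_num at this
    exact this
  by_cases hH0 : ∀ j, H j = 0
  · exfalso
    have hAinj : Function.Injective (fun x : Fin 4 → ℂ => A.mulVec x) := by
      intro x y hxy
      have h1 : A⁻¹.mulVec (A.mulVec x) = A⁻¹.mulVec (A.mulVec y) := by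
        simp only at hxy
        rw [hxy]
      rwa [Matrix.mulVec_mulVec, Matrix.mulVec_mulVec, Matrix.nonsing_inv_mul A hA,
        Matrix.one_mulVec, Matrix.one_mulVec] at h1
    have hw0 : ∀ z : ℂ, A.mulVec ![z ^ 3, z ^ 2, z, 1] ≠ 0 := by
      intro z h0
      have hz : (![z ^ 3, z ^ 2, z, 1] : Fin 4 → ℂ) = 0 := by
        apply hAinj
        show A.mulVec _ = A.mulVec 0
        rw [Matrix.mulVec_zero]
        exact h0
      have := congrFun hz 3
      simp at this
    have hptz : ∀ z : ℂ, (fun j => MvPolynomial.eval ![z, 1] (ψ j))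
        = A.mulVec ![z ^ 3, z ^ 2, z, 1] := by
      intro z
      rw [hψeval z 1]
      norm_num
    have hsing : ∀ z c : ℂ, c ≠ 0 →
        MultAtLeast f (c • A.mulVec ![z ^ 3, z ^ 2, z, 1]) 2 := by
      intro z c hc l hl
      have hsmul : (c • A.mulVec ![z ^ 3, z ^ 2, z, 1])
          = fun i => c * (A.mulVec ![z ^ 3, z ^ 2, z, 1]) i := rfl
      match l with
      | [] =>
          have hz : MvPolynomial.eval (A.mulVec ![z ^ 3, z ^ 2, z, 1]) f = 0 := by
            rw [← hptz z, ← eval_aeval, hE, map_zero]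
          rw [pderivList_nil, hsmul, eval_smul_of_isHom hhom c _, hz, mul_zero]
      | [j] =>
          have hz : MvPolynomial.eval (A.mulVec ![z ^ 3, z ^ 2, z, 1])
              (MvPolynomial.pderiv j f) = 0 := by
            rw [← hptz z, ← eval_aeval]
            show MvPolynomial.eval ![z, 1] (H j) = 0
            rw [hH0 j, map_zero]
          show MvPolynomial.eval _ (MvPolynomial.pderiv j f) = 0
          rw [hsmul, eval_smul_of_isHom (isHom_pderiv hhom j) c _, hz, mul_zero]
      | (i1 :: i2 :: l') =>
          simp at hl
    have hmem : ∀ z : ℂ,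
        Projectivization.mk ℂ (A.mulVec ![z ^ 3, z ^ 2, z, 1]) (hw0 z) ∈ SingSet f := by
      intro z
      obtain ⟨u, hu⟩ := Projectivization.exists_smul_eq_mk_rep ℂ _ (hw0 z)
      show SingularAt f _
      unfold SingularAt
      rw [← hu, Units.smul_def]
      exact hsing z u (Units.ne_zero u)
    have hinj : Function.Injective
        (fun z : ℂ => Projectivization.mk ℂ (A.mulVec ![z ^ 3, z ^ 2, z, 1]) (hw0 z)) := by
      intro z1 z2 h12
      simp only at h12
      rw [Projectivization.mk_eq_mk_iff] at h12
      obtain ⟨u, hu⟩ := h12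
      rw [Units.smul_def, ← Matrix.mulVec_smul] at hu
      have := hAinj hu
      have h3 := congrFun this 3
      have h2 := congrFun this 2
      simp [Pi.smul_apply, smul_eq_mul] at h3 h2
      rw [h3] at h2
      simpa using h2.symm
    exact hfin.not_infinite (Set.infinite_of_injective_forall_mem hinj hmem)
  push_neg at hH0
  obtain ⟨j0, hj0⟩ := hH0
  set G : Fin 4 → MvPolynomial (Fin 2) ℂ :=
    fun r => ∑ j, MvPolynomial.C (A j r) * H j with hG
  have hGhom : ∀ r, (G r).IsHomogeneous 15 := fun r =>
    MvPolynomial.IsHomogeneous.sum _ _ _ (fun j _ => (hHhom j).C_mul _)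
  have hGmult : ∀ r (i : Fin k), MultAtLeast (G r) ![s i, t i] 2 := by
    intro r i
    apply multAtLeast_sum
    intro j _
    apply multAtLeast_C_mul
    apply multAtLeast_aeval
    rw [hψeval (s i) (t i)]
    intro l hl
    show MvPolynomial.eval _ (pderivList (j :: l) f) = 0
    apply (htp i).1 (j :: l)
    simp only [List.length_cons]
    omega
  have hGne : ¬(∀ r, G r = 0) := by
    intro hall
    apply hj0
    set A' : Matrix (Fin 4) (Fin 4) (MvPolynomial (Fin 2) ℂ) :=
      (A.map MvPolynomial.C).transpose with hA'
    have hdet : IsUnit A'.det := by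
      rw [hA', Matrix.det_transpose]
      have hmm : (A.map ⇑(MvPolynomial.C : ℂ →+* MvPolynomial (Fin 2) ℂ))
          = (MvPolynomial.C : ℂ →+* MvPolynomial (Fin 2) ℂ).mapMatrix A :=
        (RingHom.mapMatrix_apply _ _).symm
      rw [hmm, ← RingHom.map_det]
      exact hA.map (MvPolynomial.C : ℂ →+* MvPolynomial (Fin 2) ℂ)
    have hmv : A'.mulVec H = 0 := by
      funext r
      have h1 : A'.mulVec H r = ∑ j, MvPolynomial.C (A j r) * H j := by
        simp [hA', Matrix.mulVec, dotProduct, Matrix.transpose_apply, Matrix.map_apply]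
      have h2 := hall r
      rw [hG] at h2
      rw [h1]
      exact h2
    have hzero : H = 0 := by
      have h1 : A'⁻¹.mulVec (A'.mulVec H) = A'⁻¹.mulVec 0 := by rw [hmv]
      rwa [Matrix.mulVec_mulVec, Matrix.nonsing_inv_mul A' hdet, Matrix.one_mulVec,
        Matrix.mulVec_zero] at h1
    exact congrFun hzero j0
  have hchain : ∀ ii : Fin 2, (∑ r, G r * MvPolynomial.pderiv ii (v r)) = 0 := by
    intro ii
    have h1 : MvPolynomial.pderiv ii (MvPolynomial.aeval ψ f) = 0 := by rw [hE, map_zero]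
    rw [pderiv_aeval] at h1
    have h2 : ∀ j, MvPolynomial.pderiv ii (ψ j)
        = ∑ r, MvPolynomial.C (A j r) * MvPolynomial.pderiv ii (v r) := by
      intro j
      simp only [hψ, map_sum]
      exact Finset.sum_congr rfl fun r _ => MvPolynomial.pderiv_C_mul
    calc (∑ r, G r * MvPolynomial.pderiv ii (v r))
        = ∑ r, ∑ j, (MvPolynomial.C (A j r) * H j) * MvPolynomial.pderiv ii (v r) := by
          apply Finset.sum_congr rfl
          intro r _
          rw [hG, Finset.sum_mul]
      _ = ∑ j, ∑ r, H j * (MvPolynomial.C (A j r) * MvPolynomial.pderiv ii (v r)) := by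
          rw [Finset.sum_comm]
          apply Finset.sum_congr rfl
          intro j _
          apply Finset.sum_congr rfl
          intro r _
          ring
      _ = ∑ j, H j * MvPolynomial.pderiv ii (ψ j) := by
          apply Finset.sum_congr rfl
          intro j _
          rw [← Finset.mul_sum, ← h2 j]
      _ = ∑ j, MvPolynomial.aeval ψ (MvPolynomial.pderiv j f) * MvPolynomial.pderiv ii (ψ j) := by
          apply Finset.sum_congr rfl
          intro j _
          rw [hH]
      _ = 0 := h1
  have dS_T : MvPolynomial.pderiv (0 : Fin 2) (MvPolynomial.X 1 : MvPolynomial (Fin 2) ℂ) = 0 :=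
    MvPolynomial.pderiv_X_of_ne (by decide)
  have dT_S : MvPolynomial.pderiv (1 : Fin 2) (MvPolynomial.X 0 : MvPolynomial (Fin 2) ℂ) = 0 :=
    MvPolynomial.pderiv_X_of_ne (by decide)
  have R1 : 3 * MvPolynomial.X 0 ^ 2 * G 0 + 2 * (MvPolynomial.X 0 * MvPolynomial.X 1) * G 1
      + MvPolynomial.X 1 ^ 2 * G 2 = 0 := by
    have h0 := hchain 0
    rw [Fin.sum_univ_four] at h0
    simp only [hv, Matrix.cons_val_zero, Matrix.cons_val_one, Matrix.head_cons,
      Matrix.cons_val_two, Matrix.tail_cons, Matrix.cons_val_three,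
      MvPolynomial.pderiv_pow, MvPolynomial.pderiv_mul, MvPolynomial.pderiv_X_self,
      dS_T, dT_S, mul_zero, zero_mul, add_zero, zero_add, mul_one, Nat.cast_ofNat] at h0
    linear_combination h0
  have R2 : MvPolynomial.X 0 ^ 2 * G 1 + 2 * (MvPolynomial.X 0 * MvPolynomial.X 1) * G 2
      + 3 * MvPolynomial.X 1 ^ 2 * G 3 = 0 := by
    have h0 := hchain 1
    rw [Fin.sum_univ_four] at h0
    simp only [hv, Matrix.cons_val_zero, Matrix.cons_val_one, Matrix.head_cons,
      Matrix.cons_val_two, Matrix.tail_cons, Matrix.cons_val_three,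
      MvPolynomial.pderiv_pow, MvPolynomial.pderiv_mul, MvPolynomial.pderiv_X_self,
      dS_T, dT_S, mul_zero, zero_mul, add_zero, zero_add, mul_one, Nat.cast_ofNat] at h0
    linear_combination h0
  obtain ⟨α, β, hα0, hα1, hα2, hα3⟩ := syzygy R1 R2
  have hmultαβ : ∀ i, MultAtLeast α ![s i, t i] 2 ∧ MultAtLeast β ![s i, t i] 2 := fun i =>
    syzygy_coeff_mult hα0 hα1 hα2 hα3 (hstn i)
      (hGmult 0 i) (hGmult 1 i) (hGmult 2 i) (hGmult 3 i)
  have hαhom : α.IsHomogeneous 13 := by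
    apply isHom_of_X_pow_mul (i := 1)
    rw [show (13 : ℕ) + 2 = 15 from rfl, ← hα0]
    exact hGhom 0
  have hβhom : β.IsHomogeneous 13 := by
    apply isHom_of_X_pow_mul (i := 0)
    rw [show (13 : ℕ) + 2 = 15 from rfl, ← hα3]
    exact hGhom 3
  by_cases hαz : α = 0
  · have hβz : β ≠ 0 := by
      intro hβz
      apply hGne
      intro r
      have h0 : G 0 = 0 := by rw [hα0, hαz, mul_zero]
      have h1 : G 1 = 0 := by rw [hα1, hαz, hβz]; ring
      have h2 : G 2 = 0 := by rw [hα2, hαz, hβz]; ring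
      have h3 : G 3 = 0 := by rw [hα3, hβz, mul_zero]
      fin_cases r
      · exact h0
      · exact h1
      · exact h2
      · exact h3
    have := count_bound β hβz hβhom s t hstn hdist (fun i => (hmultαβ i).2)
    omega
  · have := count_bound α hαz hαhom s t hstn hdist (fun i => (hmultαβ i).1)
    omega
end
end

section
/- Let f ∈ ℂ[x,y,z,w] be a nonzero homogeneous polynomial of degree d, and suppose that for i = 1, …, 4 the i-th coordinate vertex of ℙ³(ℂ) has multiplicity ≥ mᵢ on {f = 0} (all partial derivatives of f of order < mᵢ vanish at the vertex; mᵢ = 0 allowed). Then there exists a homogeneous polynomial g ∈ ℂ[x,y,z,w] of degree 3d − m₁ − m₂ − m₃ − m₄ with f(yzw, xzw, xyw, xyz) = x^{m₁} y^{m₂} z^{m₃} w^{m₄} · g(x,y,z,w). If moreover the multiplicity of {f = 0} at the i-th vertex is exactly mᵢ (some partial derivative of f of order mᵢ does not vanish there), then the i-th coordinate does not divide g. In particular, the reciprocal transformation (x : y : z : w) ↦ (1/x : 1/y : 1/z : 1/w) maps a surface of degree d with multiplicities m₁, …, m₄ at the fundamental points to a surface of degree 3d − m₁ − ⋯ − m₄.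 -/
open MvPolynomial

noncomputable section

namespace ReciprocalAux

open MvPolynomial Finsupp Finset

lemma pderivList_nil {n : ℕ} (f : MvPolynomial (Fin n) ℂ) : pderivList [] f = f := rfl

lemma pderivList_cons {n : ℕ} (k : Fin n) (l : List (Fin n)) (f : MvPolynomial (Fin n) ℂ) :
    pderivList (k :: l) f = pderivList l (MvPolynomial.pderiv k f) := rfl

lemma coeff_pderiv {n : ℕ} (j : Fin n) (f : MvPolynomial (Fin n) ℂ) (b : Fin n →₀ ℕ) :
    coeff b (MvPolynomial.pderiv j f)
      = ((b j : ℂ) + 1) * coeff (b + Finsupp.single j 1) f := by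
  induction f using MvPolynomial.induction_on' with
  | monomial u c =>
    rw [pderiv_monomial, coeff_monomial, coeff_monomial]
    by_cases h : u = b + Finsupp.single j 1
    · subst h
      have h1 : b + Finsupp.single j 1 - Finsupp.single j 1 = b := by simp
      have h2 : ((b + Finsupp.single j 1 : Fin n →₀ ℕ)) j = b j + 1 := by
        rw [Finsupp.add_apply, Finsupp.single_eq_same]
      rw [if_pos h1, if_pos rfl, h2]
      push_cast
      ring
    · rw [if_neg h]
      by_cases h2 : u - Finsupp.single j 1 = b
      · by_cases h3 : u j = 0
        · rw [if_pos h2]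
          simp [h3]
        · exfalso
          apply h
          ext k
          have hb : u k - (Finsupp.single j 1) k = b k := by
            rw [← Finsupp.tsub_apply, h2]
          rw [Finsupp.add_apply]
          rcases eq_or_ne k j with rfl | hk
          · simp only [Finsupp.single_eq_same] at hb ⊢
            omega
          · simp only [Finsupp.single_apply, if_neg (Ne.symm hk)] at hb ⊢
            omega
      · rw [if_neg h2, mul_zero]
  | add p q hp hq =>
    simp only [map_add, coeff_add, hp, hq]
    ring

lemma mem_support_of_pderiv {n : ℕ} {j : Fin n} {f : MvPolynomial (Fin n) ℂ} {b : Fin n →₀ ℕ}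
    (hb : b ∈ (MvPolynomial.pderiv j f).support) : b + Finsupp.single j 1 ∈ f.support := by
  rw [MvPolynomial.mem_support_iff] at hb ⊢
  intro hz
  exact hb (by rw [coeff_pderiv, hz, mul_zero])

/-- off-degree of a monomial exponent with respect to `i`. -/
def Off {n : ℕ} (i : Fin n) (a : Fin n →₀ ℕ) : ℕ := ∑ j ∈ Finset.univ.erase i, a j

lemma isHomogeneous_pderiv {n d : ℕ} {f : MvPolynomial (Fin n) ℂ} (j : Fin n)
    (hhom : f.IsHomogeneous d) : (MvPolynomial.pderiv j f).IsHomogeneous (d - 1) := by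
  intro b hb
  have hmem : coeff (b + Finsupp.single j 1) f ≠ 0 := by
    intro hz
    exact hb (by rw [coeff_pderiv, hz, mul_zero])
  have h2 := hhom hmem
  rw [map_add] at h2
  have h3 : (Finsupp.weight 1) (Finsupp.single j 1) = 1 := by
    simp [Finsupp.weight_apply, Finsupp.sum_single_index]
  rw [h3] at h2
  omega

lemma sum_univ_of_mem_support {n d : ℕ} {f : MvPolynomial (Fin n) ℂ} (hhom : f.IsHomogeneous d)
    {b : Fin n →₀ ℕ} (hb : b ∈ f.support) : ∑ j, b j = d := by
  have h1 : (Finsupp.weight 1) b = d := hhom (MvPolynomial.mem_support_iff.mp hb)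
  have h2 : b.degree = d := by rw [Finsupp.degree_eq_weight_one]; exact h1
  rw [← h2]
  exact (Finset.sum_subset (Finset.subset_univ _)
    (fun j _ hj => Finsupp.notMem_support_iff.mp hj)).symm

lemma eval_pderivList_eq_zero {n : ℕ} (i : Fin n) :
    ∀ (l : List (Fin n)) (mm : ℕ) (f : MvPolynomial (Fin n) ℂ),
      (∀ b ∈ f.support, mm ≤ Off i b) → l.length < mm →
      MvPolynomial.eval (Pi.single i 1) (pderivList l f) = 0 := by
  intro l
  induction l with
  | nil =>
    intro mm f hsupp hlen
    rw [pderivList_nil, eval_eq']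
    apply Finset.sum_eq_zero
    intro b hb
    have h1 : 1 ≤ Off i b := le_trans (by omega) (hsupp b hb)
    obtain ⟨j, hj, hbj⟩ : ∃ j ∈ Finset.univ.erase i, b j ≠ 0 := by
      by_contra hc
      push_neg at hc
      have : Off i b = 0 := Finset.sum_eq_zero hc
      omega
    have hz : (Pi.single i 1 : Fin n → ℂ) j ^ b j = 0 := by
      rw [Pi.single_eq_of_ne (Finset.ne_of_mem_erase hj)]
      exact zero_pow hbj
    rw [Finset.prod_eq_zero (Finset.mem_univ j) hz, mul_zero]
  | cons k l ih =>
    intro mm f hsupp hlen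
    rw [pderivList_cons]
    apply ih (mm - 1)
    · intro b hb
      have h2 := hsupp _ (mem_support_of_pderiv hb)
      have h3 : Off i (b + Finsupp.single k 1) ≤ Off i b + 1 := by
        unfold Off
        simp only [Finsupp.add_apply]
        rw [Finset.sum_add_distrib]
        have h4 : ∑ j ∈ Finset.univ.erase i, (Finsupp.single k 1) j
            ≤ ∑ j : Fin n, (Finsupp.single k 1) j :=
          Finset.sum_le_sum_of_subset (Finset.subset_univ _)
        have h5 : ∑ j : Fin n, (Finsupp.single k 1 : Fin n →₀ ℕ) j = 1 := by
          simp [Finsupp.single_apply]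
        omega
      omega
    · simp only [List.length_cons] at hlen
      omega

lemma exists_pderivList {n : ℕ} (i : Fin n) :
    ∀ (k d : ℕ) (f : MvPolynomial (Fin n) ℂ) (a : Fin n →₀ ℕ),
      f.IsHomogeneous d → coeff a f ≠ 0 → Off i a = k →
      ∃ l : List (Fin n), l.length = k ∧
        MvPolynomial.eval (Pi.single i 1) (pderivList l f) ≠ 0 := by
  intro k
  induction k with
  | zero =>
    intro d f a hhom ha hoff
    have hsup : a ∈ f.support := MvPolynomial.mem_support_iff.mpr ha
    have hzero : ∀ j, j ≠ i → a j = 0 := by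
      intro j hj
      by_contra hne
      have h1 : 0 < Off i a := by
        unfold Off
        exact Finset.sum_pos' (fun _ _ => Nat.zero_le _)
          ⟨j, Finset.mem_erase.mpr ⟨hj, Finset.mem_univ j⟩, Nat.pos_of_ne_zero hne⟩
      omega
    refine ⟨[], rfl, ?_⟩
    rw [pderivList_nil, eval_eq']
    rw [Finset.sum_eq_single_of_mem a hsup ?_]
    · have hone : ∏ j : Fin n, (Pi.single i 1 : Fin n → ℂ) j ^ a j = 1 := by
        apply Finset.prod_eq_one
        intro j _
        rcases eq_or_ne j i with rfl | hj
        · rw [Pi.single_eq_same, one_pow]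
        · rw [hzero j hj, pow_zero]
      rw [hone, mul_one]
      exact ha
    · intro b hb hne
      have hbzero : ∃ j, j ≠ i ∧ b j ≠ 0 := by
        by_contra hc
        push_neg at hc
        apply hne
        ext j
        rcases eq_or_ne j i with rfl | hj
        · have hsa := sum_univ_of_mem_support hhom hsup
          have hsb := sum_univ_of_mem_support hhom hb
          have e1 : ∑ t : Fin n, a t = a j + Off j a :=
            (Finset.add_sum_erase _ _ (Finset.mem_univ j)).symm
          have e2 : ∑ t : Fin n, b t = b j + Off j b :=
            (Finset.add_sum_erase _ _ (Finset.mem_univ j)).symm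
          have e3 : Off j b = 0 := Finset.sum_eq_zero fun t ht =>
            hc t (Finset.ne_of_mem_erase ht)
          omega
        · rw [hzero j hj, hc j hj]
      obtain ⟨j, hj, hbj⟩ := hbzero
      have hz : (Pi.single i 1 : Fin n → ℂ) j ^ b j = 0 := by
        rw [Pi.single_eq_of_ne hj]
        exact zero_pow hbj
      rw [Finset.prod_eq_zero (Finset.mem_univ j) hz, mul_zero]
  | succ k ih =>
    intro d f a hhom ha hoff
    obtain ⟨j, hji, hj0⟩ : ∃ j ∈ Finset.univ.erase i, a j ≠ 0 := by
      by_contra hc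
      push_neg at hc
      have : Off i a = 0 := Finset.sum_eq_zero hc
      omega
    have hone : Finsupp.single j 1 ≤ a := Finsupp.single_le_iff.mpr (by omega)
    have hadd : a - Finsupp.single j 1 + Finsupp.single j 1 = a :=
      tsub_add_cancel_of_le hone
    have hc : coeff (a - Finsupp.single j 1) (MvPolynomial.pderiv j f) ≠ 0 := by
      rw [coeff_pderiv, hadd]
      refine mul_ne_zero ?_ ha
      have : (((a - Finsupp.single j 1 : Fin n →₀ ℕ) j : ℕ) : ℂ) + 1
          = (((a - Finsupp.single j 1 : Fin n →₀ ℕ) j + 1 : ℕ) : ℂ) := by push_cast; ring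
      rw [this]
      exact Nat.cast_ne_zero.mpr (Nat.succ_ne_zero _)
    have hoff' : Off i (a - Finsupp.single j 1) = k := by
      unfold Off at hoff ⊢
      have e1 : ∑ t ∈ Finset.univ.erase i, a t
          = a j + ∑ t ∈ (Finset.univ.erase i).erase j, a t :=
        (Finset.add_sum_erase _ _ hji).symm
      have e2 : ∑ t ∈ Finset.univ.erase i, (a - Finsupp.single j 1 : Fin n →₀ ℕ) t
          = (a - Finsupp.single j 1 : Fin n →₀ ℕ) j
            + ∑ t ∈ (Finset.univ.erase i).erase j, (a - Finsupp.single j 1 : Fin n →₀ ℕ) t :=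
        (Finset.add_sum_erase _ _ hji).symm
      have e3 : ∑ t ∈ (Finset.univ.erase i).erase j, (a - Finsupp.single j 1 : Fin n →₀ ℕ) t
          = ∑ t ∈ (Finset.univ.erase i).erase j, a t := by
        apply Finset.sum_congr rfl
        intro t ht
        have htj : t ≠ j := Finset.ne_of_mem_erase ht
        rw [Finsupp.tsub_apply, Finsupp.single_apply, if_neg (Ne.symm htj)]
        omega
      have e4 : (a - Finsupp.single j 1 : Fin n →₀ ℕ) j = a j - 1 := by
        rw [Finsupp.tsub_apply, Finsupp.single_eq_same]
      omega
    obtain ⟨l, hl, hne⟩ := ih (d - 1) (MvPolynomial.pderiv j f) (a - Finsupp.single j 1)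
      (isHomogeneous_pderiv j hhom) hc hoff'
    exact ⟨j :: l, by simp [hl], by rwa [pderivList_cons]⟩

/-- The exponent map of the reciprocal substitution. -/
def Emap {n : ℕ} (a : Fin n →₀ ℕ) : Fin n →₀ ℕ :=
  Finsupp.equivFunOnFinite.symm fun j => Off j a

lemma Emap_apply {n : ℕ} (a : Fin n →₀ ℕ) (j : Fin n) : Emap a j = Off j a := rfl

lemma aeval_monomial_recip {n : ℕ} (a : Fin n →₀ ℕ) (c : ℂ) :
    MvPolynomial.aeval
        (fun i => ∏ j ∈ Finset.univ.erase i, (MvPolynomial.X j : MvPolynomial (Fin n) ℂ))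
        (MvPolynomial.monomial a c)
      = MvPolynomial.monomial (Emap a) c := by
  rw [MvPolynomial.aeval_monomial, Finsupp.prod_fintype _ _ (fun i => pow_zero _)]
  have step1 : ∀ i : Fin n,
      (∏ j ∈ Finset.univ.erase i, (MvPolynomial.X j : MvPolynomial (Fin n) ℂ)) ^ a i
        = ∏ j : Fin n, (if j = i then 1 else (MvPolynomial.X j : MvPolynomial (Fin n) ℂ) ^ a i) := by
    intro i
    rw [← Finset.prod_pow]
    rw [Finset.prod_congr rfl (fun j hj =>
      (if_neg (Finset.ne_of_mem_erase hj)).symm)]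
    apply Finset.prod_subset (Finset.subset_univ _)
    intro j _ hj
    have : j = i := by
      by_contra hne
      exact hj (Finset.mem_erase.mpr ⟨hne, Finset.mem_univ j⟩)
    rw [if_pos this]
  have step2 :
      ∏ i : Fin n, ∏ j : Fin n,
          (if j = i then 1 else (MvPolynomial.X j : MvPolynomial (Fin n) ℂ) ^ a i)
        = ∏ j : Fin n, (MvPolynomial.X j : MvPolynomial (Fin n) ℂ) ^ Off j a := by
    rw [Finset.prod_comm]
    apply Finset.prod_congr rfl
    intro j _
    have e1 : ∏ i : Fin n, (if j = i then 1 else (MvPolynomial.X j : MvPolynomial (Fin n) ℂ) ^ a i)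
        = ∏ i ∈ Finset.univ.erase j, (MvPolynomial.X j : MvPolynomial (Fin n) ℂ) ^ a i := by
      rw [← Finset.prod_subset (Finset.subset_univ (Finset.univ.erase j))
        (fun i _ hi => if_pos (by
          by_contra hne
          exact hi (Finset.mem_erase.mpr ⟨Ne.symm hne, Finset.mem_univ i⟩)))]
      exact Finset.prod_congr rfl (fun i hi =>
        if_neg (Ne.symm (Finset.ne_of_mem_erase hi)))
    rw [e1, Finset.prod_pow_eq_pow_sum]
    rfl
  simp_rw [step1]
  rw [step2, MvPolynomial.algebraMap_eq, MvPolynomial.monomial_eq]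
  congr 1
  rw [Finsupp.prod_fintype _ _ (fun i => pow_zero _)]
  exact Finset.prod_congr rfl fun j _ => rfl

end ReciprocalAux

open ReciprocalAux in
/-- the reciprocal (space Cremona) transformation.  If `{f = 0}` has
multiplicity `≥ mᵢ` at the `i`-th coordinate vertex, then substituting
`(x, y, z, w) ↦ (yzw, xzw, xyw, xyz)` into `f` yields `x^{m₁} y^{m₂} z^{m₃} w^{m₄} · g`
with `g` homogeneous of degree `3d − m₁ − m₂ − m₃ − m₄`; and if the multiplicity at the
`i`-th vertex is exactly `mᵢ`, the `i`-th variable does not divide `g`.  Thus the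
reciprocal transformation maps a degree-`d` surface with multiplicities `m₁, …, m₄` at
the fundamental points to a surface of degree `3d − m₁ − ⋯ − m₄`. -/
theorem reciprocal_transformation
    (d : ℕ) (f : MvPolynomial (Fin 4) ℂ) (hf : f ≠ 0) (hhom : f.IsHomogeneous d)
    (m : Fin 4 → ℕ)
    (hmult : ∀ i, MultAtLeast f (Pi.single i 1) (m i)) :
    ∃ g : MvPolynomial (Fin 4) ℂ,
      g.IsHomogeneous (3 * d - (m 0 + m 1 + m 2 + m 3)) ∧
      MvPolynomial.aeval
          (fun i => ∏ j ∈ Finset.univ.erase i, MvPolynomial.X j) f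
        = (∏ i, MvPolynomial.X i ^ m i) * g ∧
      ∀ i, (∃ l : List (Fin 4), l.length = m i ∧
              MvPolynomial.eval (Pi.single i 1) (pderivList l f) ≠ 0) →
        ¬ (MvPolynomial.X i ∣ g) := by
  classical
  set M : Fin 4 →₀ ℕ := Finsupp.equivFunOnFinite.symm m with hMdef
  have hMap : ∀ j, M j = m j := fun j => rfl
  have hstepA : ∀ a ∈ f.support, ∀ i, m i ≤ Off i a := by
    intro a ha i
    by_contra hlt
    push_neg at hlt
    obtain ⟨l, hl, hne⟩ := exists_pderivList i (Off i a) d f a hhom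
      (MvPolynomial.mem_support_iff.mp ha) rfl
    exact hne (hmult i l (by omega))
  have hOffd : ∀ a ∈ f.support, ∀ i, a i + Off i a = d := by
    intro a ha i
    rw [← sum_univ_of_mem_support hhom ha]
    exact Finset.add_sum_erase _ _ (Finset.mem_univ i)
  have hME : ∀ a ∈ f.support, M ≤ Emap a := by
    intro a ha
    exact Finsupp.le_def.mpr fun j => hstepA a ha j
  refine ⟨∑ a ∈ f.support, MvPolynomial.monomial (Emap a - M) (MvPolynomial.coeff a f),
    ?_, ?_, ?_⟩
  · apply MvPolynomial.IsHomogeneous.sum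
    intro a ha
    apply MvPolynomial.isHomogeneous_monomial
    have hdeg : (Emap a - M).degree = ∑ j, (Emap a - M) j :=
      Finset.sum_subset (Finset.subset_univ _)
        (fun j _ hj => Finsupp.notMem_support_iff.mp hj)
    rw [hdeg]
    have happ : ∀ j, (Emap a - M) j = Off j a - m j := by
      intro j
      rw [Finsupp.tsub_apply, Emap_apply, hMap]
    simp only [happ]
    rw [Fin.sum_univ_four]
    have h0 := hOffd a ha 0
    have h1 := hOffd a ha 1
    have h2 := hOffd a ha 2
    have h3 := hOffd a ha 3
    have g0 := hstepA a ha 0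
    have g1 := hstepA a ha 1
    have g2 := hstepA a ha 2
    have g3 := hstepA a ha 3
    have hs := sum_univ_of_mem_support hhom ha
    rw [Fin.sum_univ_four] at hs
    omega
  · have hP : (∏ i, (MvPolynomial.X i : MvPolynomial (Fin 4) ℂ) ^ m i)
        = MvPolynomial.monomial M 1 := by
      rw [← MvPolynomial.prod_X_pow_eq_monomial]
      symm
      apply Finset.prod_subset (Finset.subset_univ _)
      intro j _ hj
      rw [Finsupp.notMem_support_iff.mp hj, pow_zero]
    conv_lhs => rw [f.as_sum]
    rw [map_sum, hP, Finset.mul_sum]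
    apply Finset.sum_congr rfl
    intro a ha
    rw [aeval_monomial_recip, MvPolynomial.monomial_mul, one_mul,
      add_tsub_cancel_of_le (hME a ha)]
  · intro i hex hdvd
    obtain ⟨a₀, ha₀, hEa₀⟩ : ∃ a ∈ f.support, Off i a = m i := by
      by_contra hc
      push_neg at hc
      obtain ⟨l, hl, hne⟩ := hex
      apply hne
      apply eval_pderivList_eq_zero i l (m i + 1) f ?_ (by omega)
      intro b hb
      have hb1 := hstepA b hb i
      have hb2 := hc b hb
      omega
    obtain ⟨h, hh⟩ := hdvd
    have hinj : ∀ a ∈ f.support, Emap a - M = Emap a₀ - M → a = a₀ := by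
      intro a ha heq
      have h1 : Emap a = Emap a₀ := by
        rw [← add_tsub_cancel_of_le (hME a ha), ← add_tsub_cancel_of_le (hME a₀ ha₀), heq]
      ext j
      have e1 := hOffd a ha j
      have e2 := hOffd a₀ ha₀ j
      have e3 : Off j a = Off j a₀ := by
        rw [← Emap_apply, ← Emap_apply, h1]
      omega
    have hcoeff : MvPolynomial.coeff (Emap a₀ - M)
        (∑ a ∈ f.support, MvPolynomial.monomial (Emap a - M) (MvPolynomial.coeff a f))
        = MvPolynomial.coeff a₀ f := by
      rw [MvPolynomial.coeff_sum]
      rw [Finset.sum_eq_single_of_mem a₀ ha₀ (fun a ha hne => ?_)]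
      · rw [MvPolynomial.coeff_monomial, if_pos rfl]
      · rw [MvPolynomial.coeff_monomial, if_neg (fun heq => hne (hinj a ha heq))]
    have hb0i : (Emap a₀ - M) i = 0 := by
      rw [Finsupp.tsub_apply, Emap_apply, hMap, hEa₀]
      omega
    rw [hh] at hcoeff
    have hX : (MvPolynomial.X i : MvPolynomial (Fin 4) ℂ)
        = MvPolynomial.monomial (Finsupp.single i 1) 1 := rfl
    rw [hX, MvPolynomial.coeff_monomial_mul'] at hcoeff
    have hnotle : ¬ (Finsupp.single i 1 ≤ Emap a₀ - M) := by
      rw [Finsupp.single_le_iff, hb0i]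
      omega
    rw [if_neg hnotle] at hcoeff
    exact MvPolynomial.mem_support_iff.mp ha₀ hcoeff.symm
end
end

section
/- Fix a₁, a₂, a₃, b₁, b₂, b₃ ∈ ℂ and set q₁ = z² + a₁y + b₁z − (a₁+b₁+1)yz, q₂ = x² + a₂z + b₂x − (a₂+b₂+1)xz, q₃ = y² + a₃x + b₃y − (a₃+b₃+1)xy, and q = (a₁−z)(a₂−x)(a₃−y) + (b₁+z)(b₂+x)(b₃+y). Then: (i) the identity (q₁, q₂, q₃)ᵀ = M · (1−x, 1−y, 1−z)ᵀ holds, where M is the matrix with rows (0, (b₁+z)z, (a₁−z)y), ((a₂−x)z, 0, (b₂+x)x), ((b₃+y)y, (a₃−y)x, 0); and (ii) every point (x, y, z) ∈ ℂ³ with q₁(x,y,z) = q₂(x,y,z) = q₃(x,y,z) = 0, xyz ≠ 0 and (x, y, z) ≠ (1, 1, 1) satisfies q(x, y, z) = 0. -/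
/-- with `q₁ = z² + a₁y + b₁z − (a₁+b₁+1)yz`,
`q₂ = x² + a₂z + b₂x − (a₂+b₂+1)xz`, `q₃ = y² + a₃x + b₃y − (a₃+b₃+1)xy` and
`q = (a₁−z)(a₂−x)(a₃−y) + (b₁+z)(b₂+x)(b₃+y)`:
(i) `(q₁,q₂,q₃)ᵀ = M·(1−x,1−y,1−z)ᵀ` for the matrix `M` with rows
`(0, (b₁+z)z, (a₁−z)y)`, `((a₂−x)z, 0, (b₂+x)x)`, `((b₃+y)y, (a₃−y)x, 0)`;
(ii) every common zero of `q₁, q₂, q₃` with `xyz ≠ 0` and `(x,y,z) ≠ (1,1,1)`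
is a zero of `q`. -/
theorem quadric_through_base_points (a₁ a₂ a₃ b₁ b₂ b₃ : ℂ) :
    (∀ x y z : ℂ,
      Matrix.mulVec
        !![0, (b₁ + z) * z, (a₁ - z) * y;
           (a₂ - x) * z, 0, (b₂ + x) * x;
           (b₃ + y) * y, (a₃ - y) * x, 0]
        ![1 - x, 1 - y, 1 - z]
      = ![z ^ 2 + a₁ * y + b₁ * z - (a₁ + b₁ + 1) * y * z,
          x ^ 2 + a₂ * z + b₂ * x - (a₂ + b₂ + 1) * x * z,
          y ^ 2 + a₃ * x + b₃ * y - (a₃ + b₃ + 1) * x * y]) ∧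
    (∀ x y z : ℂ,
      z ^ 2 + a₁ * y + b₁ * z - (a₁ + b₁ + 1) * y * z = 0 →
      x ^ 2 + a₂ * z + b₂ * x - (a₂ + b₂ + 1) * x * z = 0 →
      y ^ 2 + a₃ * x + b₃ * y - (a₃ + b₃ + 1) * x * y = 0 →
      x * y * z ≠ 0 → (x, y, z) ≠ (1, 1, 1) →
      (a₁ - z) * (a₂ - x) * (a₃ - y) + (b₁ + z) * (b₂ + x) * (b₃ + y) = 0) := by
  have key : ∀ x y z : ℂ,
      Matrix.mulVec
        !![0, (b₁ + z) * z, (a₁ - z) * y;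
           (a₂ - x) * z, 0, (b₂ + x) * x;
           (b₃ + y) * y, (a₃ - y) * x, 0]
        ![1 - x, 1 - y, 1 - z]
      = ![z ^ 2 + a₁ * y + b₁ * z - (a₁ + b₁ + 1) * y * z,
          x ^ 2 + a₂ * z + b₂ * x - (a₂ + b₂ + 1) * x * z,
          y ^ 2 + a₃ * x + b₃ * y - (a₃ + b₃ + 1) * x * y] := by
    intro x y z
    funext i
    fin_cases i <;>
      simp [Matrix.mulVec, dotProduct, Fin.sum_univ_three] <;> ring
  refine ⟨key, ?_⟩
  intro x y z h1 h2 h3 hxyz hne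
  set M : Matrix (Fin 3) (Fin 3) ℂ :=
    !![0, (b₁ + z) * z, (a₁ - z) * y;
       (a₂ - x) * z, 0, (b₂ + x) * x;
       (b₃ + y) * y, (a₃ - y) * x, 0] with hM
  have hv : M.mulVec ![1 - x, 1 - y, 1 - z] = 0 := by
    rw [key x y z]
    funext i
    fin_cases i <;> simp [h1, h2, h3]
  have hvne : ![1 - x, 1 - y, 1 - z] ≠ 0 := by
    intro h
    apply hne
    have h0 := congrFun h 0
    have h1' := congrFun h 1
    have h2' := congrFun h 2
    simp at h0 h1' h2'
    have : x = 1 := by linear_combination -h0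
    have : y = 1 := by linear_combination -h1'
    have : z = 1 := by linear_combination -h2'
    simp_all
  have hdet : M.det = 0 := by
    rw [← Matrix.exists_mulVec_eq_zero_iff]
    exact ⟨_, hvne, hv⟩
  have hdet' : M.det = x * y * z *
      ((a₁ - z) * (a₂ - x) * (a₃ - y) + (b₁ + z) * (b₂ + x) * (b₃ + y)) := by
    rw [hM, Matrix.det_fin_three]
    simp
    ring
  rw [hdet'] at hdet
  exact (mul_eq_zero.mp hdet).resolve_left hxyz
end
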